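/- Let * be a continuous t-norm and T an algebra of truth values for *. Then Taut([0,1],⊙) ⊆ Taut(T,*) (i.e. the induced logic extends Łukasiewicz logic) if and only if there exists a subset S ⊆ [0,1] with 0, 1 ∈ S, closed under ⊙ and under →_⊙ (where x →_⊙ y = min(1, 1−x+y)), and an isomorphism of truth-value algebras σ : (T,*) → (S,⊙). -/

import Mathlib

open Set

noncomputable section

/-- The real unit interval `[0,1]` as a subset of `ℝ`. -/
def I01 : Set ℝ := Set.Icc 0 1

/-- A continuous t-norm on `[0,1]`. -/
structure ContTNorm where
  mul : ℝ → ℝ → ℝ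
  maps_to : ∀ x ∈ I01, ∀ y ∈ I01, mul x y ∈ I01
  continuousOn : ContinuousOn (fun p : ℝ × ℝ => mul p.1 p.2) (I01 ×ˢ I01)
  assoc : ∀ x ∈ I01, ∀ y ∈ I01, ∀ z ∈ I01, mul (mul x y) z = mul x (mul y z)
  comm : ∀ x ∈ I01, ∀ y ∈ I01, mul x y = mul y x
  mono : ∀ a ∈ I01, ∀ b ∈ I01, ∀ c ∈ I01, b ≤ c → mul a b ≤ mul a c
  one_mul' : ∀ x ∈ I01, mul 1 x = x

/-- The residuum of a t-norm: `x →* y := sup { c ∈ [0,1] | x * c ≤ y }`. -/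
def resid (t : ContTNorm) (x y : ℝ) : ℝ :=
  sSup {c | c ∈ I01 ∧ t.mul x c ≤ y}

/-- An algebra of truth values for the t-norm `t`: a subset of `[0,1]` containing
`0` and `1` and closed under `t.mul` and its residuum. -/
structure TruthAlg (t : ContTNorm) where
  carrier : Set ℝ
  subset : carrier ⊆ I01
  zero_mem : (0:ℝ) ∈ carrier
  one_mem : (1:ℝ) ∈ carrier
  mul_mem : ∀ x ∈ carrier, ∀ y ∈ carrier, t.mul x y ∈ carrier
  resid_mem : ∀ x ∈ carrier, ∀ y ∈ carrier, resid t x y ∈ carrier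

/-- Propositional formulas over countably many variables with `&`, `→`, `⊥`. -/
inductive Formula : Type
  | var : ℕ → Formula
  | bot : Formula
  | conj : Formula → Formula → Formula
  | impl : Formula → Formula → Formula

/-- `α ↔ β := (α → β) & (β → α)`. -/
def Formula.iff (a b : Formula) : Formula := .conj (.impl a b) (.impl b a)

/-- The valuation determined by an assignment `v` of reals to the variables. -/
def eval (t : ContTNorm) (v : ℕ → ℝ) : Formula → ℝ
  | .var i => v i
  | .bot => 0
  | .conj a b => t.mul (eval t v a) (eval t v b)
  | .impl a b => resid t (eval t v a) (eval t v b)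

/-- A valuation into `(T, t)` is (identified with) an assignment of values of `T`
to the propositional variables. -/
def IsValuation (t : ContTNorm) (T : TruthAlg t) (v : ℕ → ℝ) : Prop :=
  ∀ i, v i ∈ T.carrier

/-- The logic induced by `(T, t)`: all formulas true to degree 1 under every valuation. -/
def Taut (t : ContTNorm) (T : TruthAlg t) : Set Formula :=
  {α | ∀ v : ℕ → ℝ, IsValuation t T v → eval t v α = 1}

/-- Principle P1. -/
def P1 (L : Set Formula) : Prop :=
  ∀ (t : ContTNorm) (T : TruthAlg t), Taut t T = L →
    ∀ α β : Formula,
      (Formula.iff α β ∈ L ↔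
        ∀ v : ℕ → ℝ, IsValuation t T v → (eval t v α = 1 ↔ eval t v β = 1))

/-- Principle P2. -/
def P2 (L : Set Formula) : Prop :=
  ∀ (t : ContTNorm) (T : TruthAlg t), Taut t T = L →
    ∀ v w : ℕ → ℝ, IsValuation t T v → IsValuation t T w → v ≠ w →
      ∃ α : Formula, 0 < eval t v α ∧ eval t w α = 0

/-- The Gödel t-norm: minimum. -/
def minT : ContTNorm where
  mul := fun x y => min x y
  maps_to := by
    rintro x ⟨hx0, hx1⟩ y ⟨hy0, hy1⟩
    exact ⟨le_min hx0 hy0, min_le_of_left_le hx1⟩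
  continuousOn := (continuous_fst.min continuous_snd).continuousOn
  assoc := fun x _ y _ z _ => min_assoc x y z
  comm := fun x _ y _ => min_comm x y
  mono := fun a _ b _ c _ h => min_le_min le_rfl h
  one_mul' := by rintro x ⟨hx0, hx1⟩; exact min_eq_right hx1

/-- The Łukasiewicz t-norm: `x ⊙ y = max 0 (x + y - 1)`. -/
def lukT : ContTNorm where
  mul := fun x y => max 0 (x + y - 1)
  maps_to := by
    rintro x ⟨hx0, hx1⟩ y ⟨hy0, hy1⟩
    exact ⟨le_max_left _ _, max_le zero_le_one (by linarith)⟩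
  continuousOn :=
    (continuous_const.max ((continuous_fst.add continuous_snd).sub continuous_const)).continuousOn
  assoc := by
    rintro x ⟨hx0, hx1⟩ y ⟨hy0, hy1⟩ z ⟨hz0, hz1⟩
    simp only [max_def]
    split_ifs <;> linarith
  comm := by intro x _ y _; rw [add_comm]
  mono := by
    rintro a _ b _ c _ h
    exact max_le_max le_rfl (by linarith)
  one_mul' := by
    rintro x ⟨hx0, hx1⟩
    try dsimp only
    rw [show (1:ℝ) + x - 1 = x by ring, max_eq_right hx0]

/-- The product t-norm: ordinary multiplication. -/
def prodT : ContTNorm where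
  mul := fun x y => x * y
  maps_to := by
    rintro x ⟨hx0, hx1⟩ y ⟨hy0, hy1⟩
    exact ⟨mul_nonneg hx0 hy0, by nlinarith⟩
  continuousOn := (continuous_fst.mul continuous_snd).continuousOn
  assoc := fun x _ y _ z _ => mul_assoc x y z
  comm := fun x _ y _ => mul_comm x y
  mono := by rintro a ⟨ha0, _⟩ b _ c _ h; exact mul_le_mul_of_nonneg_left h ha0
  one_mul' := fun x _ => one_mul x

lemma ContTNorm.mul_zero' (t : ContTNorm) {x : ℝ} (hx : x ∈ I01) : t.mul x 0 = 0 := by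
  have h01 : (0:ℝ) ∈ I01 := ⟨le_rfl, zero_le_one⟩
  have h11 : (1:ℝ) ∈ I01 := ⟨zero_le_one, le_rfl⟩
  have h1 : t.mul x 0 = t.mul 0 x := t.comm x hx 0 h01
  have h2 : t.mul 0 x ≤ t.mul 0 1 := t.mono 0 h01 x hx 1 h11 hx.2
  have h3 : t.mul 0 1 = t.mul 1 0 := t.comm 0 h01 1 h11
  have h4 : t.mul 1 0 = 0 := t.one_mul' 0 h01
  have h5 : t.mul x 0 ∈ I01 := t.maps_to x hx 0 h01
  rw [h3, h4] at h2
  rw [h1] at h5 ⊢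
  exact le_antisymm h2 h5.1

lemma resid_mem_I01 (t : ContTNorm) {x y : ℝ} (hx : x ∈ I01) (hy : y ∈ I01) :
    resid t x y ∈ I01 := by
  have h01 : (0:ℝ) ∈ I01 := ⟨le_rfl, zero_le_one⟩
  have h0 : (0:ℝ) ∈ {c | c ∈ I01 ∧ t.mul x c ≤ y} :=
    ⟨h01, by rw [t.mul_zero' hx]; exact hy.1⟩
  have hbdd : BddAbove {c | c ∈ I01 ∧ t.mul x c ≤ y} := ⟨1, fun c hc => hc.1.2⟩
  constructor
  · exact le_csSup hbdd h0
  · exact csSup_le ⟨0, h0⟩ fun c hc => hc.1.2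

/-- The full algebra of truth values `[0,1]` for a t-norm `t`. -/
def fullAlg (t : ContTNorm) : TruthAlg t where
  carrier := I01
  subset := le_rfl
  zero_mem := ⟨le_rfl, zero_le_one⟩
  one_mem := ⟨zero_le_one, le_rfl⟩
  mul_mem := t.maps_to
  resid_mem := fun _ hx _ hy => resid_mem_I01 t hx hy

lemma resid_eq_one_of_le (t : ContTNorm) {x y : ℝ} (hx : x ∈ I01) (hy : y ∈ I01)
    (hxy : x ≤ y) : resid t x y = 1 := by
  have h11 : (1:ℝ) ∈ I01 := ⟨zero_le_one, le_rfl⟩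
  have hmul : t.mul x 1 = x := by rw [t.comm x hx 1 h11]; exact t.one_mul' x hx
  have h1 : (1:ℝ) ∈ {c | c ∈ I01 ∧ t.mul x c ≤ y} := ⟨h11, by rw [hmul]; exact hxy⟩
  have hbdd : BddAbove {c | c ∈ I01 ∧ t.mul x c ≤ y} := ⟨1, fun c hc => hc.1.2⟩
  exact le_antisymm (csSup_le ⟨1, h1⟩ fun c hc => hc.1.2) (le_csSup hbdd h1)

lemma resid_one_zero (t : ContTNorm) : resid t 1 0 = 0 := by
  have : {c | c ∈ I01 ∧ t.mul 1 c ≤ 0} = {0} := by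
    ext c
    constructor
    · rintro ⟨hc, hle⟩
      have := t.one_mul' c hc
      have := hc.1
      simp only [Set.mem_singleton_iff]
      linarith [this, (t.one_mul' c hc) ▸ hle]
    · rintro rfl
      exact ⟨⟨le_rfl, zero_le_one⟩, by rw [t.mul_zero' ⟨zero_le_one, le_rfl⟩]⟩
  rw [resid, this, csSup_singleton]

/-- The two-element algebra of truth values `{0,1}`. -/
def boolAlg (t : ContTNorm) : TruthAlg t where
  carrier := {0, 1}
  subset := by
    rintro x (rfl | rfl)
    · exact ⟨le_rfl, zero_le_one⟩
    · exact ⟨zero_le_one, le_rfl⟩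
  zero_mem := Or.inl rfl
  one_mem := Or.inr rfl
  mul_mem := by
    have h01 : (0:ℝ) ∈ I01 := ⟨le_rfl, zero_le_one⟩
    have h11 : (1:ℝ) ∈ I01 := ⟨zero_le_one, le_rfl⟩
    rintro x (rfl | rfl) y (rfl | rfl)
    · exact Or.inl (t.mul_zero' h01)
    · exact Or.inl (by rw [t.comm 0 h01 1 h11]; exact t.mul_zero' h11)
    · exact Or.inl (t.mul_zero' h11)
    · exact Or.inr (t.one_mul' 1 h11)
  resid_mem := by
    have h01 : (0:ℝ) ∈ I01 := ⟨le_rfl, zero_le_one⟩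
    have h11 : (1:ℝ) ∈ I01 := ⟨zero_le_one, le_rfl⟩
    rintro x (rfl | rfl) y (rfl | rfl)
    · exact Or.inr (resid_eq_one_of_le t h01 h01 le_rfl)
    · exact Or.inr (resid_eq_one_of_le t h01 h11 zero_le_one)
    · exact Or.inl (resid_one_zero t)
    · exact Or.inr (resid_eq_one_of_le t h11 h11 le_rfl)

/-- Classical logic: the logic induced by the two-element algebra `{0,1}`
(this is independent of the chosen continuous t-norm). -/
def ClassicalLogic : Set Formula := Taut minT (boolAlg minT)


/-- An isomorphism of truth-value algebras: an order-preserving bijection of the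
carriers that transforms the first t-norm into the second. -/
def IsTruthIso (t t' : ContTNorm) (S S' : Set ℝ) (σ : ℝ → ℝ) : Prop :=
  Set.BijOn σ S S' ∧
  (∀ a ∈ S, ∀ b ∈ S, a ≤ b → σ a ≤ σ b) ∧
  (∀ a ∈ S, ∀ b ∈ S, σ (t.mul a b) = t'.mul (σ a) (σ b))


/-! ### Basic infrastructure for continuous t-norms -/

lemma zeroI : (0:ℝ) ∈ I01 := ⟨le_rfl, zero_le_one⟩
lemma oneI : (1:ℝ) ∈ I01 := ⟨zero_le_one, le_rfl⟩

namespace ContTNorm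

variable (t : ContTNorm)

lemma mul_one' {x : ℝ} (hx : x ∈ I01) : t.mul x 1 = x := by
  rw [t.comm x hx 1 oneI]; exact t.one_mul' x hx

lemma mono_left {a b c : ℝ} (ha : a ∈ I01) (hb : b ∈ I01) (hc : c ∈ I01) (h : a ≤ b) :
    t.mul a c ≤ t.mul b c := by
  rw [t.comm a ha c hc, t.comm b hb c hc]; exact t.mono c hc a ha b hb h

lemma mul_le_left {x y : ℝ} (hx : x ∈ I01) (hy : y ∈ I01) : t.mul x y ≤ x := by
  calc t.mul x y ≤ t.mul x 1 := t.mono x hx y hy 1 oneI hy.2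
  _ = x := t.mul_one' hx

lemma mul_le_right {x y : ℝ} (hx : x ∈ I01) (hy : y ∈ I01) : t.mul x y ≤ y := by
  rw [t.comm x hx y hy]; exact t.mul_le_left hy hx

lemma mono_mono {a b c d : ℝ} (ha : a ∈ I01) (hb : b ∈ I01) (hc : c ∈ I01) (hd : d ∈ I01)
    (hab : a ≤ b) (hcd : c ≤ d) : t.mul a c ≤ t.mul b d :=
  le_trans (t.mono_left ha hb hc hab) (t.mono b hb c hc d hd hcd)

lemma continuousOn_mul_left {x : ℝ} (hx : x ∈ I01) :
    ContinuousOn (fun c => t.mul x c) I01 := by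
  have : ContinuousOn ((fun p : ℝ × ℝ => t.mul p.1 p.2) ∘ (fun c => ((x : ℝ), c))) I01 :=
    t.continuousOn.comp ((continuous_const.prodMk continuous_id).continuousOn)
      (fun c hc => Set.mk_mem_prod hx hc)
  exact this

/-- The set over which the residuum is a supremum. -/
def Rset (x y : ℝ) : Set ℝ := {c | c ∈ I01 ∧ t.mul x c ≤ y}

lemma resid_eq_sSup_Rset (x y : ℝ) : resid t x y = sSup (t.Rset x y) := rfl

lemma Rset_nonempty {x y : ℝ} (hx : x ∈ I01) (hy : 0 ≤ y) : (t.Rset x y).Nonempty :=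
  ⟨0, zeroI, by rw [t.mul_zero' hx]; exact hy⟩

lemma Rset_bdd (x y : ℝ) : BddAbove (t.Rset x y) := ⟨1, fun c hc => hc.1.2⟩

lemma Rset_closed {x : ℝ} (hx : x ∈ I01) (y : ℝ) : IsClosed (t.Rset x y) := by
  have h := (t.continuousOn_mul_left hx).preimage_isClosed_of_isClosed
    (isClosed_Icc : IsClosed I01) (isClosed_Iic : IsClosed (Set.Iic y))
  convert h using 1
  rfl

lemma resid_mem_Rset {x y : ℝ} (hx : x ∈ I01) (hy : 0 ≤ y) : resid t x y ∈ t.Rset x y :=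
  (t.Rset_closed hx y).csSup_mem (t.Rset_nonempty hx hy) (t.Rset_bdd x y)

lemma mul_resid_le {x y : ℝ} (hx : x ∈ I01) (hy : 0 ≤ y) : t.mul x (resid t x y) ≤ y :=
  (t.resid_mem_Rset hx hy).2

lemma resid_mem {x y : ℝ} (hx : x ∈ I01) (hy : 0 ≤ y) : resid t x y ∈ I01 :=
  (t.resid_mem_Rset hx hy).1

lemma le_resid {x y c : ℝ} (hc : c ∈ I01) (h : t.mul x c ≤ y) : c ≤ resid t x y :=
  le_csSup (t.Rset_bdd x y) ⟨hc, h⟩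

lemma le_of_resid_eq_one {x y : ℝ} (hx : x ∈ I01) (hy : 0 ≤ y) (h : resid t x y = 1) :
    x ≤ y := by
  have := t.mul_resid_le hx hy
  rwa [h, t.mul_one' hx] at this

lemma resid_zero_left {y : ℝ} (hy : 0 ≤ y) : resid t 0 y = 1 := by
  have : t.Rset 0 y = I01 := by
    ext c; simp only [Rset, Set.mem_setOf_eq, and_iff_left_iff_imp]
    intro hc; rw [t.comm 0 zeroI c hc, t.mul_zero' hc]; exact hy
  have h2 : resid t 0 y = sSup I01 := by rw [resid_eq_sSup_Rset, this]
  rw [h2]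
  exact csSup_Icc zero_le_one

/-- Divisibility: `x * (x → y) = y` when `y ≤ x`. -/
lemma mul_resid_eq {x y : ℝ} (hx : x ∈ I01) (hy : y ∈ I01) (hyx : y ≤ x) :
    t.mul x (resid t x y) = y := by
  have h0 : t.mul x 0 = 0 := t.mul_zero' hx
  have h1 : t.mul x 1 = x := t.mul_one' hx
  have ivt := intermediate_value_Icc (zero_le_one) (t.continuousOn_mul_left hx)
  have hy' : y ∈ Set.Icc (t.mul x 0) (t.mul x 1) := by rw [h0, h1]; exact ⟨hy.1, hyx⟩
  obtain ⟨c, hc, hcy⟩ := ivt hy'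
  refine le_antisymm (t.mul_resid_le hx hy.1) ?_
  have hcr : c ≤ resid t x y := t.le_resid hc (le_of_eq hcy)
  calc y = t.mul x c := hcy.symm
  _ ≤ t.mul x (resid t x y) := t.mono x hx c hc _ (t.resid_mem hx hy.1) hcr

/-- If `a` is idempotent then `a * y = y` for `y ≤ a`. -/
lemma idem_mul {a y : ℝ} (ha : a ∈ I01) (hidem : t.mul a a = a) (hy : y ∈ I01) (hya : y ≤ a) :
    t.mul a y = y := by
  have h0 : t.mul a 0 = 0 := t.mul_zero' ha
  have h1 : t.mul a 1 = a := t.mul_one' ha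
  have ivt := intermediate_value_Icc (zero_le_one) (t.continuousOn_mul_left ha)
  have hy' : y ∈ Set.Icc (t.mul a 0) (t.mul a 1) := by rw [h0, h1]; exact ⟨hy.1, hya⟩
  obtain ⟨c, hc, hcy⟩ := ivt hy'
  have hac : t.mul a c ∈ I01 := t.maps_to a ha c hc
  have hcy' : t.mul a c = y := hcy
  calc t.mul a y = t.mul a (t.mul a c) := by rw [hcy']
  _ = t.mul (t.mul a a) c := (t.assoc a ha a ha c hc).symm
  _ = t.mul a c := by rw [hidem]
  _ = y := hcy'

lemma idem_mul_min {a y : ℝ} (ha : a ∈ I01) (hidem : t.mul a a = a) (hy : y ∈ I01) :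
    t.mul a y = min a y := by
  rcases le_total y a with h | h
  · rw [t.idem_mul ha hidem hy h, min_eq_right h]
  · refine le_antisymm ?_ ?_
    · rw [min_eq_left h]; exact t.mul_le_left ha hy
    · rw [min_eq_left h]
      calc a = t.mul a a := hidem.symm
      _ ≤ t.mul a y := t.mono a ha a ha y hy h

end ContTNorm

/-- powers w.r.t. a t-norm -/
def ContTNorm.tpow (t : ContTNorm) (x : ℝ) : ℕ → ℝ
  | 0 => 1
  | n+1 => t.mul (ContTNorm.tpow t x n) x

namespace ContTNorm

variable (t : ContTNorm)

lemma tpow_zero (x : ℝ) : t.tpow x 0 = 1 := rfl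

lemma tpow_succ (x : ℝ) (n : ℕ) : t.tpow x (n+1) = t.mul (t.tpow x n) x := rfl

lemma tpow_mem {x : ℝ} (hx : x ∈ I01) : ∀ n, t.tpow x n ∈ I01 := by
  intro n
  induction n with
  | zero => exact oneI
  | succ n ih => exact t.maps_to _ ih x hx

lemma tpow_succ_le {x : ℝ} (hx : x ∈ I01) (n : ℕ) : t.tpow x (n+1) ≤ t.tpow x n :=
  t.mul_le_left (t.tpow_mem hx n) hx

lemma tpow_antitone {x : ℝ} (hx : x ∈ I01) : Antitone (t.tpow x) :=
  antitone_nat_of_succ_le (t.tpow_succ_le hx)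

lemma tpow_one {x : ℝ} (hx : x ∈ I01) : t.tpow x 1 = x := by
  rw [tpow_succ, tpow_zero]; exact t.one_mul' x hx

lemma tpow_add {x : ℝ} (hx : x ∈ I01) (m n : ℕ) :
    t.tpow x (m + n) = t.mul (t.tpow x m) (t.tpow x n) := by
  induction n with
  | zero => rw [Nat.add_zero, tpow_zero, t.mul_one' (t.tpow_mem hx m)]
  | succ n ih =>
    rw [← Nat.add_assoc, tpow_succ, tpow_succ, ih,
      t.assoc _ (t.tpow_mem hx m) _ (t.tpow_mem hx n) x hx]

lemma tpow_le_tpow {x y : ℝ} (hx : x ∈ I01) (hy : y ∈ I01) (h : x ≤ y) (n : ℕ) :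
    t.tpow x n ≤ t.tpow y n := by
  induction n with
  | zero => exact le_rfl
  | succ n ih => exact t.mono_mono (t.tpow_mem hx n) (t.tpow_mem hy n) hx hy ih h

lemma tpow_iInf_mem {x : ℝ} (hx : x ∈ I01) : (⨅ n, t.tpow x n) ∈ I01 := by
  constructor
  · exact le_ciInf fun n => (t.tpow_mem hx n).1
  · exact le_trans (ciInf_le ⟨0, by rintro r ⟨n, rfl⟩; exact (t.tpow_mem hx n).1⟩ 0) (t.tpow_mem hx 0).2

lemma tpow_tendsto {x : ℝ} (hx : x ∈ I01) :
    Filter.Tendsto (t.tpow x) Filter.atTop (nhds (⨅ n, t.tpow x n)) :=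
  tendsto_atTop_ciInf (t.tpow_antitone hx) ⟨0, by rintro r ⟨n, rfl⟩; exact (t.tpow_mem hx n).1⟩

lemma iInf_le_tpow {x : ℝ} (hx : x ∈ I01) (n : ℕ) : (⨅ m, t.tpow x m) ≤ t.tpow x n :=
  ciInf_le ⟨0, by rintro r ⟨m, rfl⟩; exact (t.tpow_mem hx m).1⟩ n

/-- the infimum of the powers is idempotent. -/
lemma tpow_iInf_idem {x : ℝ} (hx : x ∈ I01) :
    t.mul (⨅ n, t.tpow x n) (⨅ n, t.tpow x n) = (⨅ n, t.tpow x n) := by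
  set a := ⨅ n, t.tpow x n with ha
  have haI : a ∈ I01 := t.tpow_iInf_mem hx
  have hten := t.tpow_tendsto hx
  have h2 : Filter.Tendsto (fun n => t.tpow x (n + n)) Filter.atTop (nhds a) :=
    hten.comp (Filter.tendsto_atTop_mono (fun n => Nat.le_add_left n n) Filter.tendsto_id)
  have hcw : ContinuousWithinAt (fun p : ℝ × ℝ => t.mul p.1 p.2) (I01 ×ˢ I01) (a, a) :=
    t.continuousOn _ (Set.mk_mem_prod haI haI)
  have hpair : Filter.Tendsto (fun n => (t.tpow x n, t.tpow x n)) Filter.atTop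
      (nhdsWithin (a, a) (I01 ×ˢ I01)) := by
    rw [tendsto_nhdsWithin_iff]
    exact ⟨hten.prodMk_nhds hten, Filter.Eventually.of_forall fun n =>
      Set.mk_mem_prod (t.tpow_mem hx n) (t.tpow_mem hx n)⟩
  have h3 : Filter.Tendsto (fun n => t.mul (t.tpow x n) (t.tpow x n)) Filter.atTop
      (nhds (t.mul a a)) := hcw.tendsto.comp hpair
  have heq : (fun n => t.mul (t.tpow x n) (t.tpow x n)) = fun n => t.tpow x (n + n) := by
    funext n; exact (t.tpow_add hx n n).symm
  rw [heq] at h3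
  exact tendsto_nhds_unique h3 h2

/-- cancellation-style lemma: if `u * s = u > 0` and `sⁿ → 0` then contradiction. -/
lemma no_fixed_mul {u s : ℝ} (hu : u ∈ I01) (hs : s ∈ I01) (hupos : 0 < u)
    (hlim : Filter.Tendsto (t.tpow s) Filter.atTop (nhds 0))
    (hfix : t.mul u s = u) : False := by
  have hpow : ∀ n, t.mul u (t.tpow s n) = u := by
    intro n
    induction n with
    | zero => exact t.mul_one' hu
    | succ n ih =>
      rw [tpow_succ, ← t.assoc u hu _ (t.tpow_mem hs n) s hs, ih, hfix]
  have hcw : ContinuousWithinAt (fun c => t.mul u c) I01 0 :=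
    (t.continuousOn_mul_left hu) 0 zeroI
  have hpair : Filter.Tendsto (t.tpow s) Filter.atTop (nhdsWithin 0 I01) := by
    rw [tendsto_nhdsWithin_iff]
    exact ⟨hlim, Filter.Eventually.of_forall fun n => t.tpow_mem hs n⟩
  have h3 : Filter.Tendsto (fun n => t.mul u (t.tpow s n)) Filter.atTop
      (nhds (t.mul u 0)) := hcw.tendsto.comp hpair
  rw [t.mul_zero' hu] at h3
  have : Filter.Tendsto (fun _ : ℕ => u) Filter.atTop (nhds 0) := by
    convert h3 using 1; funext n; rw [hpow n]
  have := tendsto_nhds_unique this tendsto_const_nhds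
  exact hupos.ne' this.symm

end ContTNorm


/-! ### Nilpotent Archimedean components -/

/-- A nilpotent Archimedean component `[0, e]` of a continuous t-norm:
`e` is the least positive idempotent, and there is a zero divisor. -/
structure NilpComp (t : ContTNorm) where
  e : ℝ
  heI : e ∈ I01
  hepos : 0 < e
  hidem : t.mul e e = e
  noidem : ∀ c, 0 < c → c < e → t.mul c c ≠ c
  w : ℝ
  hwI : w ∈ I01
  hwpos : 0 < w
  hwlt : w < e
  hw0 : t.mul w w = 0

namespace NilpComp

variable {t : ContTNorm} (C : NilpComp t)

lemma memI {x : ℝ} (hx : x ∈ Set.Icc 0 C.e) : x ∈ I01 := ⟨hx.1, hx.2.trans C.heI.2⟩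

lemma mul_e_min {y : ℝ} (hy : y ∈ I01) : t.mul C.e y = min C.e y :=
  t.idem_mul_min C.heI C.hidem hy

lemma mul_mem {x y : ℝ} (hx : x ∈ Set.Icc 0 C.e) (hy : y ∈ Set.Icc 0 C.e) :
    t.mul x y ∈ Set.Icc 0 C.e := by
  constructor
  · exact (t.maps_to x (C.memI hx) y (C.memI hy)).1
  · exact le_trans (t.mul_le_left (C.memI hx) (C.memI hy)) hx.2

/-- Every element strictly below `e` is power-convergent to 0. -/
lemma tpow_tendsto_zero {x : ℝ} (hx : x ∈ I01) (hxe : x < C.e) :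
    Filter.Tendsto (t.tpow x) Filter.atTop (nhds 0) := by
  have ha := t.tpow_iInf_idem hx
  set a := ⨅ n, t.tpow x n with hadef
  have haI : a ∈ I01 := t.tpow_iInf_mem hx
  have hax : a ≤ x := by
    have := t.iInf_le_tpow hx 1
    rwa [t.tpow_one hx] at this
  have ha0 : a = 0 := by
    by_contra h
    have hapos : 0 < a := lt_of_le_of_ne haI.1 (Ne.symm h)
    exact C.noidem a hapos (lt_of_le_of_lt hax hxe) ha
  have := t.tpow_tendsto hx
  rwa [← hadef, ha0] at this

lemma nilpotent {x : ℝ} (hx : x ∈ I01) (hxe : x < C.e) : ∃ n, t.tpow x n = 0 := by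
  have h := C.tpow_tendsto_zero hx hxe
  have : ∀ᶠ n in Filter.atTop, t.tpow x n < C.w := h.eventually_lt_const C.hwpos
  obtain ⟨n, hn⟩ := this.exists
  refine ⟨n + n, le_antisymm ?_ (t.tpow_mem hx (n+n)).1⟩
  rw [t.tpow_add hx n n, ← C.hw0]
  exact t.mono_mono (t.tpow_mem hx n) C.hwI (t.tpow_mem hx n) C.hwI hn.le hn.le

lemma exists_pred_nilp {x : ℝ} (hx : x ∈ I01) (hxpos : 0 < x) (hxe : x < C.e) :
    ∃ m, 0 < t.tpow x m ∧ t.tpow x (m + 1) = 0 := by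
  classical
  obtain ⟨n, hn⟩ := C.nilpotent hx hxe
  have hex : ∃ n, t.tpow x n = 0 := ⟨n, hn⟩
  have h1 : Nat.find hex ≠ 0 := by
    intro h0
    have := Nat.find_spec hex
    rw [h0, t.tpow_zero] at this
    exact one_ne_zero this
  obtain ⟨m, hm⟩ := Nat.exists_eq_succ_of_ne_zero h1
  refine ⟨m, ?_, ?_⟩
  · have := Nat.find_min hex (m := m) (by omega)
    exact lt_of_le_of_ne (t.tpow_mem hx m).1 (Ne.symm this)
  · rw [← Nat.succ_eq_add_one, ← hm]; exact Nat.find_spec hex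

/-- The negation of the component. -/
def Nc (x : ℝ) : ℝ := if x ≤ 0 then C.e else resid t x 0

lemma Nc_zero : C.Nc 0 = C.e := if_pos le_rfl

lemma Nc_of_pos {x : ℝ} (hx : 0 < x) : C.Nc x = resid t x 0 := if_neg (not_le.mpr hx)

lemma Nc_e : C.Nc C.e = 0 := by
  rw [C.Nc_of_pos C.hepos]
  have hset : t.Rset C.e 0 = {0} := by
    ext c
    simp only [ContTNorm.Rset, Set.mem_setOf_eq, Set.mem_singleton_iff]
    constructor
    · rintro ⟨hc, hle⟩
      rw [C.mul_e_min hc] at hle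
      rcases min_le_iff.mp hle with h | h
      · exact absurd h (not_le.mpr C.hepos)
      · exact le_antisymm h hc.1
    · rintro rfl
      exact ⟨zeroI, by rw [t.mul_zero' C.heI]⟩
  rw [ContTNorm.resid_eq_sSup_Rset, hset, csSup_singleton]

lemma mul_Nc {x : ℝ} (hx : x ∈ Set.Icc 0 C.e) : t.mul x (C.Nc x) = 0 := by
  rcases eq_or_lt_of_le hx.1 with h | h
  · rw [← h, C.Nc_zero, t.comm 0 zeroI C.e C.heI, t.mul_zero' C.heI]
  · rw [C.Nc_of_pos h]
    exact le_antisymm (t.mul_resid_le (C.memI hx) le_rfl)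
      (t.maps_to x (C.memI hx) _ (t.resid_mem (C.memI hx) le_rfl)).1

lemma Nc_lt_e {x : ℝ} (hx : x ∈ Set.Icc 0 C.e) (hxpos : 0 < x) : C.Nc x < C.e := by
  by_contra h
  push_neg at h
  have hNI : C.Nc x ∈ I01 := by
    rw [C.Nc_of_pos hxpos]; exact t.resid_mem (C.memI hx) le_rfl
  have h1 : t.mul x (C.Nc x) ≥ t.mul x C.e := t.mono x (C.memI hx) C.e C.heI _ hNI h
  rw [t.comm x (C.memI hx) C.e C.heI, C.mul_e_min (C.memI hx), min_eq_right hx.2,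
    C.mul_Nc hx] at h1
  exact absurd h1 (not_le.mpr hxpos)

lemma Nc_mem {x : ℝ} (hx : x ∈ Set.Icc 0 C.e) : C.Nc x ∈ Set.Icc 0 C.e := by
  rcases eq_or_lt_of_le hx.1 with h | h
  · rw [← h, C.Nc_zero]; exact ⟨C.hepos.le, le_rfl⟩
  · refine ⟨?_, (C.Nc_lt_e hx h).le⟩
    rw [C.Nc_of_pos h]
    exact (t.resid_mem (C.memI hx) le_rfl).1

lemma Nc_memI {x : ℝ} (hx : x ∈ Set.Icc 0 C.e) : C.Nc x ∈ I01 := C.memI (C.Nc_mem hx)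

lemma Nc_pos {x : ℝ} (hx : x ∈ Set.Icc 0 C.e) (hxe : x < C.e) : 0 < C.Nc x := by
  rcases eq_or_lt_of_le hx.1 with h | h
  · rw [← h, C.Nc_zero]; exact C.hepos
  · obtain ⟨m, hm1, hm2⟩ := C.exists_pred_nilp (C.memI hx) h hxe
    rw [C.Nc_of_pos h]
    refine lt_of_lt_of_le hm1 (t.le_resid (t.tpow_mem (C.memI hx) m) ?_)
    rw [t.comm x (C.memI hx) _ (t.tpow_mem (C.memI hx) m)]
    exact le_of_eq hm2

lemma le_Nc_iff {x c : ℝ} (hx : x ∈ Set.Icc 0 C.e) (hxpos : 0 < x) (hc : c ∈ I01) :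
    c ≤ C.Nc x ↔ t.mul x c = 0 := by
  constructor
  · intro h
    refine le_antisymm ?_ (t.maps_to x (C.memI hx) c hc).1
    calc t.mul x c ≤ t.mul x (C.Nc x) := t.mono x (C.memI hx) c hc _ (C.Nc_memI hx) h
    _ = 0 := C.mul_Nc hx
  · intro h
    rw [C.Nc_of_pos hxpos]
    exact t.le_resid hc h.le

lemma Nc_antitone {x y : ℝ} (hx : x ∈ Set.Icc 0 C.e) (hy : y ∈ Set.Icc 0 C.e) (hxy : x ≤ y) :
    C.Nc y ≤ C.Nc x := by
  rcases eq_or_lt_of_le hx.1 with h | h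
  · rw [← h, C.Nc_zero]; exact (C.Nc_mem hy).2
  · have hypos : 0 < y := lt_of_lt_of_le h hxy
    rw [(C.le_Nc_iff hx h (C.Nc_memI hy))]
    refine le_antisymm ?_ (t.maps_to x (C.memI hx) _ (C.Nc_memI hy)).1
    calc t.mul x (C.Nc y) ≤ t.mul y (C.Nc y) :=
      t.mono_left (C.memI hx) (C.memI hy) (C.Nc_memI hy) hxy
    _ = 0 := C.mul_Nc hy

lemma no_fixed {u s : ℝ} (hu : u ∈ I01) (hupos : 0 < u) (hs : s ∈ I01) (hse : s < C.e)
    (hfix : t.mul u s = u) : False :=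
  t.no_fixed_mul hu hs hupos (C.tpow_tendsto_zero hs hse) hfix

/-- The negation is involutive on the component. -/
lemma Nc_invol {x : ℝ} (hx : x ∈ Set.Icc 0 C.e) : C.Nc (C.Nc x) = x := by
  rcases eq_or_lt_of_le hx.1 with h | hxpos
  · rw [← h, C.Nc_zero, C.Nc_e]
  rcases eq_or_lt_of_le hx.2 with h | hxe
  · rw [h, C.Nc_e, C.Nc_zero]
  -- now 0 < x < e
  set m := C.Nc x with hm
  have hmmem : m ∈ Set.Icc 0 C.e := C.Nc_mem hx
  have hmpos : 0 < m := C.Nc_pos hx hxe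
  have hme : m < C.e := C.Nc_lt_e hx hxpos
  set x' := C.Nc m with hx'
  have hx'mem : x' ∈ Set.Icc 0 C.e := C.Nc_mem hmmem
  have hxx' : x ≤ x' := by
    rw [hx', C.le_Nc_iff hmmem hmpos (C.memI hx)]
    rw [t.comm m (C.memI hmmem) x (C.memI hx)]
    exact C.mul_Nc hx
  rcases eq_or_lt_of_le hxx' with h | hlt
  · exact h.symm
  exfalso
  have hx'pos : 0 < x' := lt_of_le_of_lt hx.1 hlt
  -- find c with x' * c = x
  have ivt := intermediate_value_Icc (zero_le_one) (t.continuousOn_mul_left (C.memI hx'mem))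
  have hx'm : x ∈ Set.Icc (t.mul x' 0) (t.mul x' 1) := by
    rw [t.mul_zero' (C.memI hx'mem), t.mul_one' (C.memI hx'mem)]
    exact ⟨hx.1, hlt.le⟩
  obtain ⟨c, hc, hcx⟩ := ivt hx'm
  have hcx' : t.mul x' c = x := hcx
  have hce : c < C.e := by
    by_contra hce
    push_neg at hce
    have : t.mul x' C.e ≤ t.mul x' c := t.mono x' (C.memI hx'mem) C.e C.heI c hc hce
    rw [hcx', t.comm x' (C.memI hx'mem) C.e C.heI, C.mul_e_min (C.memI hx'mem),
      min_eq_right hx'mem.2] at this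
    exact absurd this (not_le.mpr hlt)
  have hcpos : 0 < c := by
    rcases eq_or_lt_of_le hc.1 with h0 | h0
    · exfalso; rw [← h0, t.mul_zero' (C.memI hx'mem)] at hcx'; exact absurd hcx'.symm hxpos.ne'
    · exact h0
  have hcm : t.mul c m < m := by
    refine lt_of_le_of_ne (t.mul_le_right hc (C.memI hmmem)) ?_
    intro heq
    exact C.no_fixed (C.memI hmmem) hmpos hc hce ((t.comm m (C.memI hmmem) c hc).trans heq)
  -- find z > m with c * z < m, z ∈ I01
  have hcont : Filter.Tendsto (fun z => t.mul c z) (nhdsWithin m (Set.Ioc m C.e))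
      (nhds (t.mul c m)) := by
    have h1 : ContinuousWithinAt (fun z => t.mul c z) I01 m :=
      (t.continuousOn_mul_left hc) m (C.memI hmmem)
    exact h1.tendsto.mono_left (nhdsWithin_mono m (fun z hz => ⟨hmmem.1.trans hz.1.le,
      hz.2.trans C.heI.2⟩))
  have hnb : (nhdsWithin m (Set.Ioc m C.e)).NeBot := by
    rw [← mem_closure_iff_nhdsWithin_neBot, closure_Ioc hme.ne]
    exact ⟨le_rfl, hme.le⟩
  have hev : ∀ᶠ z in nhdsWithin m (Set.Ioc m C.e), t.mul c z < m :=
    hcont.eventually (eventually_lt_nhds hcm) |>.mono (fun z hz => hz)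
  obtain ⟨z, hz1, hz2⟩ := (hev.and eventually_mem_nhdsWithin).exists
  have hzI : z ∈ I01 := ⟨hmmem.1.trans hz2.1.le, hz2.2.trans C.heI.2⟩
  have hxz : t.mul x z = 0 := by
    have h1 : t.mul x z = t.mul x' (t.mul c z) := by
      rw [← hcx', t.assoc x' (C.memI hx'mem) c hc z hzI]
    have h2 : t.mul x' (t.mul c z) ≤ t.mul x' m :=
      t.mono x' (C.memI hx'mem) _ (t.maps_to c hc z hzI) m (C.memI hmmem) hz1.le
    have h3 : t.mul x' m = 0 := by
      rw [t.comm x' (C.memI hx'mem) m (C.memI hmmem)]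
      exact C.mul_Nc hmmem
    rw [h1]
    exact le_antisymm (h2.trans h3.le) (t.maps_to x' (C.memI hx'mem) _
      (t.maps_to c hc z hzI)).1
  have : z ≤ m := by
    have := (C.le_Nc_iff hx hxpos hzI).mpr hxz
    rwa [← hm] at this
  exact absurd this (not_le.mpr hz2.1)


/-! ### The truncated addition of a nilpotent component -/

/-- truncated addition `x ⊕ y := ¬(¬x * ¬y)` -/
def oplus (x y : ℝ) : ℝ := C.Nc (t.mul (C.Nc x) (C.Nc y))

lemma oplus_mem {x y : ℝ} (hx : x ∈ Set.Icc 0 C.e) (hy : y ∈ Set.Icc 0 C.e) :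
    C.oplus x y ∈ Set.Icc 0 C.e :=
  C.Nc_mem (C.mul_mem (C.Nc_mem hx) (C.Nc_mem hy))

lemma oplus_memI {x y : ℝ} (hx : x ∈ Set.Icc 0 C.e) (hy : y ∈ Set.Icc 0 C.e) :
    C.oplus x y ∈ I01 := C.memI (C.oplus_mem hx hy)

lemma oplus_comm {x y : ℝ} (hx : x ∈ Set.Icc 0 C.e) (hy : y ∈ Set.Icc 0 C.e) :
    C.oplus x y = C.oplus y x := by
  unfold oplus
  rw [t.comm _ (C.Nc_memI hx) _ (C.Nc_memI hy)]

lemma Nc_oplus {x y : ℝ} (hx : x ∈ Set.Icc 0 C.e) (hy : y ∈ Set.Icc 0 C.e) :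
    C.Nc (C.oplus x y) = t.mul (C.Nc x) (C.Nc y) :=
  C.Nc_invol (C.mul_mem (C.Nc_mem hx) (C.Nc_mem hy))

lemma mul_eq_Nc_oplus {x y : ℝ} (hx : x ∈ Set.Icc 0 C.e) (hy : y ∈ Set.Icc 0 C.e) :
    t.mul x y = C.Nc (C.oplus (C.Nc x) (C.Nc y)) := by
  rw [C.Nc_oplus (C.Nc_mem hx) (C.Nc_mem hy), C.Nc_invol hx, C.Nc_invol hy]

lemma zero_oplus {y : ℝ} (hy : y ∈ Set.Icc 0 C.e) : C.oplus 0 y = y := by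
  unfold oplus
  rw [C.Nc_zero, C.mul_e_min (C.Nc_memI hy), min_eq_right (C.Nc_mem hy).2, C.Nc_invol hy]

lemma oplus_zero {y : ℝ} (hy : y ∈ Set.Icc 0 C.e) : C.oplus y 0 = y := by
  rw [C.oplus_comm hy ⟨le_rfl, C.hepos.le⟩, C.zero_oplus hy]

lemma e_oplus {y : ℝ} (hy : y ∈ Set.Icc 0 C.e) : C.oplus C.e y = C.e := by
  unfold oplus
  rw [C.Nc_e, t.comm 0 zeroI _ (C.Nc_memI hy), t.mul_zero' (C.Nc_memI hy), C.Nc_zero]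

lemma oplus_mono {x x' y y' : ℝ} (hx : x ∈ Set.Icc 0 C.e) (hx' : x' ∈ Set.Icc 0 C.e)
    (hy : y ∈ Set.Icc 0 C.e) (hy' : y' ∈ Set.Icc 0 C.e) (h1 : x ≤ x') (h2 : y ≤ y') :
    C.oplus x y ≤ C.oplus x' y' := by
  unfold oplus
  refine C.Nc_antitone (C.mul_mem (C.Nc_mem hx') (C.Nc_mem hy'))
    (C.mul_mem (C.Nc_mem hx) (C.Nc_mem hy)) ?_
  exact t.mono_mono (C.Nc_memI hx') (C.Nc_memI hx) (C.Nc_memI hy') (C.Nc_memI hy)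
    (C.Nc_antitone hx hx' h1) (C.Nc_antitone hy hy' h2)

lemma le_oplus {x y : ℝ} (hx : x ∈ Set.Icc 0 C.e) (hy : y ∈ Set.Icc 0 C.e) :
    x ≤ C.oplus x y := by
  have := C.oplus_mono hx hx ⟨le_rfl, C.hepos.le⟩ hy le_rfl hy.1
  rwa [C.oplus_zero hx] at this

lemma oplus_assoc {x y z : ℝ} (hx : x ∈ Set.Icc 0 C.e) (hy : y ∈ Set.Icc 0 C.e)
    (hz : z ∈ Set.Icc 0 C.e) : C.oplus (C.oplus x y) z = C.oplus x (C.oplus y z) := by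
  show C.Nc (t.mul (C.Nc (C.oplus x y)) (C.Nc z)) = C.Nc (t.mul (C.Nc x) (C.Nc (C.oplus y z)))
  rw [C.Nc_oplus hx hy, C.Nc_oplus hy hz,
    t.assoc _ (C.Nc_memI hx) _ (C.Nc_memI hy) _ (C.Nc_memI hz)]

lemma oplus_eq_e_iff {x y : ℝ} (hx : x ∈ Set.Icc 0 C.e) (hy : y ∈ Set.Icc 0 C.e) :
    C.oplus x y = C.e ↔ C.Nc x ≤ y := by
  constructor
  · intro h
    have h0 : t.mul (C.Nc x) (C.Nc y) = 0 := by
      have := congrArg C.Nc h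
      rwa [C.Nc_oplus hx hy, C.Nc_e] at this
    rcases eq_or_lt_of_le (C.Nc_mem hy).1 with hy0 | hy0
    · have : y = C.e := by
        have := congrArg C.Nc hy0
        rwa [C.Nc_zero, C.Nc_invol hy, eq_comm] at this
      rw [this]; exact (C.Nc_mem hx).2
    · have := (C.le_Nc_iff (C.Nc_mem hy) hy0 (C.Nc_memI hx)).mpr
        (by rwa [t.comm _ (C.Nc_memI hy) _ (C.Nc_memI hx)])
      rwa [C.Nc_invol hy] at this
  · intro h
    have h0 : t.mul (C.Nc x) (C.Nc y) = 0 := by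
      refine le_antisymm ?_ (t.maps_to _ (C.Nc_memI hx) _ (C.Nc_memI hy)).1
      calc t.mul (C.Nc x) (C.Nc y) ≤ t.mul y (C.Nc y) :=
        t.mono_left (C.Nc_memI hx) (C.memI hy) (C.Nc_memI hy) h
      _ = 0 := C.mul_Nc hy
    unfold oplus
    rw [h0, C.Nc_zero]

lemma oplus_strict {u z : ℝ} (hu : u ∈ Set.Icc 0 C.e) (hue : u < C.e)
    (hz : z ∈ Set.Icc 0 C.e) (hzpos : 0 < z) : u < C.oplus u z := by
  refine lt_of_le_of_ne (C.le_oplus hu hz) ?_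
  intro heq
  have h1 : t.mul (C.Nc u) (C.Nc z) = C.Nc u := by
    have := congrArg C.Nc heq.symm
    rwa [C.Nc_oplus hu hz] at this
  exact C.no_fixed (C.Nc_memI hu) (C.Nc_pos hu hue) (C.Nc_memI hz) (C.Nc_lt_e hz hzpos) h1

/-- exact decomposition: if `x ≤ y` then `x ⊕ (y * ¬x) = y`. -/
lemma oplus_diff {x y : ℝ} (hx : x ∈ Set.Icc 0 C.e) (hy : y ∈ Set.Icc 0 C.e) (hxy : x ≤ y) :
    C.oplus x (t.mul y (C.Nc x)) = y := by
  rcases eq_or_lt_of_le hx.2 with hxe | hxe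
  · -- x = e so y = e
    have hye : y = C.e := le_antisymm hy.2 (hxe ▸ hxy)
    rw [hxe, hye, C.Nc_e, t.mul_zero' C.heI, C.e_oplus ⟨le_rfl, C.hepos.le⟩]
  set d := t.mul y (C.Nc x) with hd
  have hdmem : d ∈ Set.Icc 0 C.e := by
    constructor
    · exact (t.maps_to y (C.memI hy) _ (C.Nc_memI hx)).1
    · exact le_trans (t.mul_le_left (C.memI hy) (C.Nc_memI hx)) hy.2
  rcases eq_or_lt_of_le hdmem.1 with hd0 | hdpos
  · -- d = 0 : then y ≤ x so x = y
    have hyx : y ≤ x := by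
      have h := (C.le_Nc_iff (C.Nc_mem hx) (C.Nc_pos hx hxe) (C.memI hy)).mpr
        (by rw [t.comm _ (C.Nc_memI hx) y (C.memI hy)]; exact hd0.symm)
      rwa [C.Nc_invol hx] at h
    have hxey : x = y := le_antisymm hxy hyx
    rw [← hd0, C.oplus_zero hx, hxey]
  have hypos : 0 < y := by
    rcases eq_or_lt_of_le hy.1 with h0 | h0
    · exfalso; rw [← h0] at hd
      rw [hd, t.comm 0 zeroI _ (C.Nc_memI hx), t.mul_zero' (C.Nc_memI hx)] at hdpos
      exact lt_irrefl 0 hdpos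
    · exact h0
  -- r := Nc x → Nc y, so that (Nc x) * r = Nc y
  set r := resid t (C.Nc x) (C.Nc y) with hr
  have hrI : r ∈ I01 := t.resid_mem (C.Nc_memI hx) (C.Nc_mem hy).1
  have hNyNx : C.Nc y ≤ C.Nc x := C.Nc_antitone hx hy hxy
  have hdiv : t.mul (C.Nc x) r = C.Nc y :=
    t.mul_resid_eq (C.Nc_memI hx) (C.Nc_memI hy) hNyNx
  have hrNcd : r ≤ C.Nc d := by
    rw [C.le_Nc_iff hdmem hdpos hrI]
    have : t.mul d r = t.mul y (t.mul (C.Nc x) r) := by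
      rw [hd, t.assoc y (C.memI hy) _ (C.Nc_memI hx) r hrI]
    rw [this, hdiv]
    exact C.mul_Nc hy
  refine le_antisymm ?_ ?_
  · -- oplus x d ≤ y
    have h1 : C.Nc y ≤ t.mul (C.Nc x) (C.Nc d) := by
      rw [← hdiv]
      exact t.mono _ (C.Nc_memI hx) r hrI _ (C.Nc_memI hdmem) hrNcd
    have h2 := C.Nc_antitone (C.Nc_mem hy) (C.mul_mem (C.Nc_mem hx) (C.Nc_mem hdmem)) h1
    rw [C.Nc_invol hy] at h2
    exact h2
  · -- y ≤ oplus x d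
    have h2 : t.mul y (t.mul (C.Nc x) (C.Nc d)) = 0 := by
      rw [← t.assoc y (C.memI hy) _ (C.Nc_memI hx) _ (C.Nc_memI hdmem), ← hd]
      exact C.mul_Nc hdmem
    have h3 : t.mul (C.Nc x) (C.Nc d) ≤ C.Nc y :=
      (C.le_Nc_iff hy hypos (t.maps_to _ (C.Nc_memI hx) _ (C.Nc_memI hdmem))).mpr h2
    have h4 := C.Nc_antitone (C.mul_mem (C.Nc_mem hx) (C.Nc_mem hdmem)) (C.Nc_mem hy) h3
    rw [C.Nc_invol hy] at h4
    exact h4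


/-! ### iterated truncated addition and counting -/

end NilpComp

/-- iterated truncated addition -/
def NilpComp.opow {t : ContTNorm} (C : NilpComp t) (z : ℝ) : ℕ → ℝ
  | 0 => 0
  | n+1 => C.oplus (NilpComp.opow C z n) z

namespace NilpComp

variable {t : ContTNorm} (C : NilpComp t)

lemma opow_zero' (z : ℝ) : C.opow z 0 = 0 := rfl

lemma opow_succ (z : ℝ) (n : ℕ) : C.opow z (n+1) = C.oplus (C.opow z n) z := rfl

lemma zero_mem : (0:ℝ) ∈ Set.Icc 0 C.e := ⟨le_rfl, C.hepos.le⟩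

lemma e_mem : C.e ∈ Set.Icc 0 C.e := ⟨C.hepos.le, le_rfl⟩

lemma opow_mem {z : ℝ} (hz : z ∈ Set.Icc 0 C.e) : ∀ n, C.opow z n ∈ Set.Icc 0 C.e := by
  intro n
  induction n with
  | zero => exact C.zero_mem
  | succ n ih => exact C.oplus_mem ih hz

lemma opow_one {z : ℝ} (hz : z ∈ Set.Icc 0 C.e) : C.opow z 1 = z := by
  rw [opow_succ, opow_zero', C.zero_oplus hz]

lemma opow_le_succ {z : ℝ} (hz : z ∈ Set.Icc 0 C.e) (n : ℕ) :
    C.opow z n ≤ C.opow z (n+1) := by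
  rw [opow_succ]; exact C.le_oplus (C.opow_mem hz n) hz

lemma opow_mono_exp {z : ℝ} (hz : z ∈ Set.Icc 0 C.e) : Monotone (C.opow z) :=
  monotone_nat_of_le_succ (C.opow_le_succ hz)

lemma opow_add {z : ℝ} (hz : z ∈ Set.Icc 0 C.e) (m n : ℕ) :
    C.opow z (m + n) = C.oplus (C.opow z m) (C.opow z n) := by
  induction n with
  | zero => rw [Nat.add_zero, opow_zero', C.oplus_zero (C.opow_mem hz m)]
  | succ n ih =>
    rw [← Nat.add_assoc, opow_succ, opow_succ, ih,
      C.oplus_assoc (C.opow_mem hz m) (C.opow_mem hz n) hz]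

lemma opow_mono_base {z z' : ℝ} (hz : z ∈ Set.Icc 0 C.e) (hz' : z' ∈ Set.Icc 0 C.e)
    (h : z ≤ z') (n : ℕ) : C.opow z n ≤ C.opow z' n := by
  induction n with
  | zero => exact le_rfl
  | succ n ih =>
    rw [opow_succ, opow_succ]
    exact C.oplus_mono (C.opow_mem hz n) (C.opow_mem hz' n) hz hz' ih h

lemma opow_double {z : ℝ} (hz : z ∈ Set.Icc 0 C.e) (n : ℕ) :
    C.opow (C.oplus z z) n = C.opow z (2*n) := by
  induction n with
  | zero => rfl
  | succ n ih =>
    have h2 : 2 * (n+1) = 2*n + (1 + 1) := by ring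
    rw [opow_succ, ih, h2, C.opow_add hz, C.opow_add hz, C.opow_one hz]

lemma Nc_one : C.Nc 1 = 0 := by
  rw [C.Nc_of_pos one_pos]; exact resid_one_zero t

lemma opow_eq_Nc_tpow {z : ℝ} (hz : z ∈ Set.Icc 0 C.e) :
    ∀ m, C.opow z m = C.Nc (t.tpow (C.Nc z) m) := by
  intro m
  induction m with
  | zero => rw [opow_zero', t.tpow_zero, C.Nc_one]
  | succ m ih =>
    rcases Nat.eq_zero_or_pos m with rfl | hm
    · rw [C.opow_one hz, t.tpow_one (C.Nc_memI hz), C.Nc_invol hz]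
    · have hmem : t.tpow (C.Nc z) m ∈ Set.Icc 0 C.e := by
        constructor
        · exact (t.tpow_mem (C.Nc_memI hz) m).1
        · calc t.tpow (C.Nc z) m ≤ t.tpow (C.Nc z) 1 :=
            t.tpow_antitone (C.Nc_memI hz) hm
          _ = C.Nc z := t.tpow_one (C.Nc_memI hz)
          _ ≤ C.e := (C.Nc_mem hz).2
      rw [opow_succ, ih, t.tpow_succ]
      show C.Nc (t.mul (C.Nc (C.Nc (t.tpow (C.Nc z) m))) (C.Nc z)) = _
      rw [C.Nc_invol hmem]

lemma exists_opow_e {z : ℝ} (hz : z ∈ Set.Icc 0 C.e) (hzpos : 0 < z) :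
    ∃ m, C.opow z m = C.e := by
  obtain ⟨k, hk⟩ := C.nilpotent (C.Nc_memI hz) (C.Nc_lt_e hz hzpos)
  exact ⟨k, by rw [C.opow_eq_Nc_tpow hz k, hk, C.Nc_zero]⟩

end NilpComp

open Classical in
/-- counting function: least `m` with `x ≤ z ⊕ ⋯ ⊕ z` (`m` times). -/
noncomputable def NilpComp.nuF {t : ContTNorm} (C : NilpComp t) (z x : ℝ) : ℕ :=
  sInf {m | x ≤ C.opow z m}

namespace NilpComp

variable {t : ContTNorm} (C : NilpComp t) {z x y : ℝ}

lemma nuF_set_nonempty (hz : z ∈ Set.Icc 0 C.e) (hzpos : 0 < z) (hx : x ≤ C.e) :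
    {m | x ≤ C.opow z m}.Nonempty := by
  obtain ⟨m, hm⟩ := C.exists_opow_e hz hzpos
  exact ⟨m, show x ≤ C.opow z m by rw [hm]; exact hx⟩

lemma le_opow_nuF (hz : z ∈ Set.Icc 0 C.e) (hzpos : 0 < z) (hx : x ≤ C.e) :
    x ≤ C.opow z (C.nuF z x) :=
  Nat.sInf_mem (C.nuF_set_nonempty hz hzpos hx)

lemma nuF_le {m : ℕ} (h : x ≤ C.opow z m) : C.nuF z x ≤ m := Nat.sInf_le h

lemma opow_lt_of_lt_nuF {m : ℕ} (hm : m < C.nuF z x) : C.opow z m < x := by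
  have := Nat.notMem_of_lt_sInf hm
  rw [Set.mem_setOf_eq] at this
  exact lt_of_not_ge this

lemma nuF_mono (hz : z ∈ Set.Icc 0 C.e) (hzpos : 0 < z) (hxy : x ≤ y) (hy : y ≤ C.e) :
    C.nuF z x ≤ C.nuF z y :=
  C.nuF_le (le_trans hxy (C.le_opow_nuF hz hzpos hy))

lemma nuF_zero : C.nuF z 0 = 0 :=
  Nat.le_zero.mp (C.nuF_le (le_of_eq (C.opow_zero' z).symm))

lemma nuF_pos (hz : z ∈ Set.Icc 0 C.e) (hzpos : 0 < z) (hxe : x ≤ C.e) (hxpos : 0 < x) :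
    1 ≤ C.nuF z x := by
  by_contra h
  push_neg at h
  have h2 := C.le_opow_nuF hz hzpos hxe
  rw [Nat.lt_one_iff.mp h, C.opow_zero'] at h2
  exact absurd h2 (not_le.mpr hxpos)

lemma opow_nuF_e (hz : z ∈ Set.Icc 0 C.e) (hzpos : 0 < z) :
    C.opow z (C.nuF z C.e) = C.e :=
  le_antisymm (C.opow_mem hz _).2 (C.le_opow_nuF hz hzpos le_rfl)

lemma opow_eq_e_of_le (hz : z ∈ Set.Icc 0 C.e) (hzpos : 0 < z) {m : ℕ}
    (hm : C.nuF z C.e ≤ m) : C.opow z m = C.e := by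
  refine le_antisymm (C.opow_mem hz m).2 ?_
  rw [← C.opow_nuF_e hz hzpos]
  exact C.opow_mono_exp hz hm

lemma nuF_le_nuF_e (hz : z ∈ Set.Icc 0 C.e) (hzpos : 0 < z) (hx : x ≤ C.e) :
    C.nuF z x ≤ C.nuF z C.e := by
  refine C.nuF_le ?_
  rw [C.opow_nuF_e hz hzpos]
  exact hx

/-- subadditivity of the counting function. -/
lemma nuF_oplus_le (hz : z ∈ Set.Icc 0 C.e) (hzpos : 0 < z)
    (hx : x ∈ Set.Icc 0 C.e) (hy : y ∈ Set.Icc 0 C.e) :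
    C.nuF z (C.oplus x y) ≤ C.nuF z x + C.nuF z y := by
  refine C.nuF_le ?_
  rw [C.opow_add hz]
  exact C.oplus_mono hx (C.opow_mem hz _) hy (C.opow_mem hz _)
    (C.le_opow_nuF hz hzpos hx.2) (C.le_opow_nuF hz hzpos hy.2)

/-- superadditivity (up to 2) of the counting function. -/
lemma nuF_oplus_ge (hz : z ∈ Set.Icc 0 C.e) (hzpos : 0 < z)
    (hx : x ∈ Set.Icc 0 C.e) (hy : y ∈ Set.Icc 0 C.e) (hxpos : 0 < x) (hypos : 0 < y) :
    min (C.nuF z C.e) (C.nuF z x + C.nuF z y) ≤ C.nuF z (C.oplus x y) + 2 := by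
  set o := C.nuF z C.e with ho
  set a := C.nuF z x with ha
  set b := C.nuF z y with hb
  have ha1 : 1 ≤ a := C.nuF_pos hz hzpos hx.2 hxpos
  have hb1 : 1 ≤ b := C.nuF_pos hz hzpos hy.2 hypos
  have hstep : C.opow z ((a-1) + (b-1)) ≤ C.oplus x y := by
    rw [C.opow_add hz]
    exact C.oplus_mono (C.opow_mem hz _) hx (C.opow_mem hz _) hy
      (C.opow_lt_of_lt_nuF (by omega)).le (C.opow_lt_of_lt_nuF (by omega)).le
  rcases le_or_gt o ((a-1)+(b-1)) with hcase | hcase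
  · -- saturated
    have : C.oplus x y = C.e := by
      refine le_antisymm (C.oplus_mem hx hy).2 ?_
      rw [← C.opow_eq_e_of_le hz hzpos hcase]
      exact hstep
    have h9 : C.nuF z (C.oplus x y) = o := by rw [this]
    rw [h9]
    exact le_trans (min_le_left _ _) (by omega)
  · by_contra hcon
    push_neg at hcon
    have hcon2 : C.nuF z (C.oplus x y) + 2 < a + b :=
      lt_of_lt_of_le hcon (min_le_right _ _)
    have h3 : C.nuF z (C.oplus x y) ≤ (a-1)+(b-1) - 1 := by omega
    have h4 : C.oplus x y ≤ C.opow z ((a-1)+(b-1) - 1) :=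
      le_trans (C.le_opow_nuF hz hzpos (C.oplus_mem hx hy).2) (C.opow_mono_exp hz h3)
    have h5 : C.opow z ((a-1)+(b-1)) ≤ C.opow z ((a-1)+(b-1)-1) := le_trans hstep h4
    -- but opow at (a+b-3) is < e hence strictly increases
    have h6 : C.opow z ((a-1)+(b-1)-1) < C.e := by
      refine C.opow_lt_of_lt_nuF ?_
      omega
    have h7 : C.opow z ((a-1)+(b-1)-1) < C.opow z ((a-1)+(b-1)) := by
      have hk : (a-1)+(b-1) = ((a-1)+(b-1)-1) + 1 := by omega
      rw [hk, opow_succ]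
      exact C.oplus_strict (C.opow_mem hz _) h6 hz hzpos
    exact absurd h5 (not_le.mpr h7)

/-- the counting function almost splits `x` and `¬x`. -/
lemma nuF_Nc_le (hz : z ∈ Set.Icc 0 C.e) (hzpos : 0 < z) (hx : x ∈ Set.Icc 0 C.e) :
    C.nuF z x + C.nuF z (C.Nc x) ≤ C.nuF z C.e + 2 := by
  set o := C.nuF z C.e with ho
  rcases eq_or_lt_of_le hx.1 with h0 | hxpos
  · rw [← h0, C.nuF_zero, C.Nc_zero]; omega
  rcases eq_or_lt_of_le hx.2 with he | hxe
  · rw [he, C.Nc_e, C.nuF_zero]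
    omega
  set a := C.nuF z x with ha
  set b := C.nuF z (C.Nc x) with hb
  have ha1 : 1 ≤ a := C.nuF_pos hz hzpos hx.2 hxpos
  have hb1 : 1 ≤ b := C.nuF_pos hz hzpos (C.Nc_mem hx).2 (C.Nc_pos hx hxe)
  have hao : a ≤ o := C.nuF_le_nuF_e hz hzpos hx.2
  have hbo : b ≤ o := C.nuF_le_nuF_e hz hzpos (C.Nc_mem hx).2
  rcases eq_or_lt_of_le hb1 with hb1' | hb2
  · omega
  -- b ≥ 2
  have hbm1pos : 0 < C.opow z (b-1) := by
    calc (0:ℝ) < C.opow z 1 := by rw [C.opow_one hz]; exact hzpos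
    _ ≤ C.opow z (b-1) := C.opow_mono_exp hz (by omega)
  have hmul0 : t.mul (C.opow z (b-1)) (C.opow z (a-1)) = 0 := by
    refine le_antisymm ?_ (t.maps_to _ (C.memI (C.opow_mem hz _)) _
      (C.memI (C.opow_mem hz _))).1
    calc t.mul (C.opow z (b-1)) (C.opow z (a-1))
        ≤ t.mul (C.Nc x) x := t.mono_mono (C.memI (C.opow_mem hz _)) (C.Nc_memI hx)
          (C.memI (C.opow_mem hz _)) (C.memI hx)
          (C.opow_lt_of_lt_nuF (by omega)).le (C.opow_lt_of_lt_nuF (by omega)).le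
    _ = 0 := by rw [t.comm _ (C.Nc_memI hx) x (C.memI hx)]; exact C.mul_Nc hx
  have h1 : C.opow z (a-1) ≤ C.Nc (C.opow z (b-1)) :=
    (C.le_Nc_iff (C.opow_mem hz _) hbm1pos (C.memI (C.opow_mem hz _))).mpr hmul0
  have h2 : C.Nc (C.opow z (b-1)) ≤ C.opow z (o - (b-1)) := by
    have he : C.oplus (C.opow z (b-1)) (C.opow z (o - (b-1))) = C.e := by
      rw [← C.opow_add hz]
      have : (b-1) + (o - (b-1)) = o := by omega
      rw [this, C.opow_nuF_e hz hzpos]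
    exact (C.oplus_eq_e_iff (C.opow_mem hz _) (C.opow_mem hz _)).mp he
  have h3 : C.opow z (a-1) ≤ C.opow z (o-b+1) := by
    have : o - (b-1) = o - b + 1 := by omega
    exact le_trans h1 (this ▸ h2)
  by_contra hcon
  push_neg at hcon
  -- a + b ≥ o + 3, so a - 1 ≥ o - b + 2
  have h6 : C.opow z (o-b+1) < C.e := C.opow_lt_of_lt_nuF (by omega)
  have h7 : C.opow z (o-b+1) < C.opow z (o-b+2) := by
    have hk : o-b+2 = (o-b+1) + 1 := by omega
    rw [hk]
    conv_rhs => rw [opow_succ]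
    exact C.oplus_strict (C.opow_mem hz _) h6 hz hzpos
  have h8 : C.opow z (o-b+2) ≤ C.opow z (a-1) := C.opow_mono_exp hz (by omega)
  exact absurd (le_trans h8 h3) (not_le.mpr h7)

/-- relation between scale `z` and its half `z'`. -/
lemma nuF_half_le {z' : ℝ} (hz : z ∈ Set.Icc 0 C.e) (hzpos : 0 < z)
    (hz' : z' ∈ Set.Icc 0 C.e) (hdouble : C.oplus z' z' = z) (hx : x ≤ C.e) :
    C.nuF z' x ≤ 2 * C.nuF z x := by
  have h1 : x ≤ C.opow z (C.nuF z x) := C.le_opow_nuF hz hzpos hx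
  have h2 : C.opow z (C.nuF z x) = C.opow z' (2 * C.nuF z x) := by
    rw [← C.opow_double hz', hdouble]
  exact C.nuF_le (le_trans h1 (le_of_eq h2))

lemma nuF_half_ge {z' : ℝ} (hz : z ∈ Set.Icc 0 C.e) (hzpos : 0 < z)
    (hz' : z' ∈ Set.Icc 0 C.e) (hz'pos : 0 < z') (hdouble : C.oplus z' z' = z) (hx : x ≤ C.e) :
    2 * C.nuF z x ≤ C.nuF z' x + 1 := by
  have h1 : x ≤ C.opow z' (C.nuF z' x) := C.le_opow_nuF hz' hz'pos hx
  have h2 : x ≤ C.opow z' (2 * ((C.nuF z' x + 1)/2)) :=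
    le_trans h1 (C.opow_mono_exp hz' (by omega))
  rw [← C.opow_double hz', hdouble] at h2
  have := C.nuF_le h2
  omega

end NilpComp


namespace NilpComp

variable {t : ContTNorm} (C : NilpComp t)

lemma continuousOn_mul_diag : ContinuousOn (fun c => t.mul c c) I01 := by
  have : ContinuousOn ((fun p : ℝ × ℝ => t.mul p.1 p.2) ∘ (fun c => (c, c))) I01 :=
    t.continuousOn.comp ((continuous_id.prodMk continuous_id).continuousOn)
      (fun c hc => Set.mk_mem_prod hc hc)
  exact this

lemma exists_half {y : ℝ} (hy : y ∈ Set.Icc 0 C.e) (hypos : 0 < y) :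
    ∃ z, 0 < z ∧ z < C.e ∧ z ∈ Set.Icc 0 C.e ∧ C.oplus z z = y := by
  rcases eq_or_lt_of_le hy.2 with hye | hye
  · -- y = e : halve using the zero divisor w
    have hwmem : C.w ∈ Set.Icc 0 C.e := ⟨C.hwI.1, C.hwlt.le⟩
    refine ⟨C.Nc C.w, C.Nc_pos hwmem C.hwlt, C.Nc_lt_e hwmem C.hwpos, C.Nc_mem hwmem, ?_⟩
    show C.Nc (t.mul (C.Nc (C.Nc C.w)) (C.Nc (C.Nc C.w))) = y
    rw [C.Nc_invol hwmem, C.hw0, C.Nc_zero, hye]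
  · -- y < e : use the intermediate value theorem on c ↦ c * c
    have hNy_pos : 0 < C.Nc y := C.Nc_pos hy hye
    have hNy_lt : C.Nc y < C.e := C.Nc_lt_e hy hypos
    have ivt := intermediate_value_Icc (zero_le_one) (continuousOn_mul_diag (t := t))
    have hmm : C.Nc y ∈ Set.Icc (t.mul 0 0) (t.mul 1 1) := by
      rw [t.mul_zero' zeroI, t.one_mul' 1 oneI]
      exact ⟨hNy_pos.le, le_trans (C.Nc_mem hy).2 C.heI.2⟩
    obtain ⟨u, hu, huu⟩ := ivt hmm
    have huu' : t.mul u u = C.Nc y := huu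
    have hue : u < C.e := by
      by_contra hue
      push_neg at hue
      have : t.mul C.e C.e ≤ t.mul u u := t.mono_mono C.heI hu C.heI hu hue hue
      rw [huu', C.hidem] at this
      exact absurd this (not_le.mpr hNy_lt)
    have hupos : 0 < u := by
      rcases eq_or_lt_of_le hu.1 with h0 | h0
      · exfalso
        rw [← h0, t.mul_zero' zeroI] at huu'
        exact absurd huu'.symm (ne_of_gt hNy_pos)
      · exact h0
    have humem : u ∈ Set.Icc 0 C.e := ⟨hu.1, hue.le⟩
    refine ⟨C.Nc u, C.Nc_pos humem hue, C.Nc_lt_e humem hupos, C.Nc_mem humem, ?_⟩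
    show C.Nc (t.mul (C.Nc (C.Nc u)) (C.Nc (C.Nc u))) = y
    rw [C.Nc_invol humem, huu', C.Nc_invol hy]

/-- The fundamental construction: a strictly increasing function `Φ` turning the
component into the Łukasiewicz t-norm on `[0,1]`. -/
lemma exists_Phi : ∃ Φ : ℝ → ℝ,
    Φ 0 = 0 ∧ Φ C.e = 1 ∧
    (∀ x, x ∈ Set.Icc 0 C.e → Φ x ∈ Set.Icc (0:ℝ) 1) ∧
    (∀ x y, x ∈ Set.Icc 0 C.e → y ∈ Set.Icc 0 C.e → x < y → Φ x < Φ y) ∧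
    (∀ x y, x ∈ Set.Icc 0 C.e → y ∈ Set.Icc 0 C.e →
      Φ (t.mul x y) = max 0 (Φ x + Φ y - 1)) ∧
    (∀ x, x ∈ Set.Icc 0 C.e → Φ (C.Nc x) = 1 - Φ x) := by
  classical
  -- the halving sequence
  have hstep : ∀ p : {u : ℝ // 0 < u ∧ u ∈ Set.Icc 0 C.e},
      ∃ q : {u : ℝ // 0 < u ∧ u ∈ Set.Icc 0 C.e}, q.1 < C.e ∧ C.oplus q.1 q.1 = p.1 := by
    rintro ⟨y, hy1, hy2⟩
    obtain ⟨z, h1, h2, h3, h4⟩ := C.exists_half hy2 hy1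
    exact ⟨⟨z, h1, h3⟩, h2, h4⟩
  choose f hf1 hf2 using hstep
  set hseq : ℕ → {u : ℝ // 0 < u ∧ u ∈ Set.Icc 0 C.e} :=
    fun n => f^[n] ⟨C.e, C.hepos, C.e_mem⟩ with hseqdef
  set h : ℕ → ℝ := fun n => (hseq n).1 with hdef
  have hpos : ∀ n, 0 < h n := fun n => (hseq n).2.1
  have hmem : ∀ n, h n ∈ Set.Icc 0 C.e := fun n => (hseq n).2.2
  have hsucc : ∀ n, hseq (n+1) = f (hseq n) := fun n => Function.iterate_succ_apply' f n _
  have hdouble : ∀ n, C.oplus (h (n+1)) (h (n+1)) = h n := by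
    intro n
    have := hf2 (hseq n)
    rw [← hsucc n] at this
    exact this
  have hlt : ∀ n, h (n+1) < C.e := by
    intro n
    have := hf1 (hseq n)
    rw [← hsucc n] at this
    exact this
  have h0e : h 0 = C.e := rfl
  -- the approximants
  set A : ℕ → ℝ → ℝ := fun n x => (C.nuF (h n) x : ℝ) / 2 ^ n with hA
  have hA_nonneg : ∀ n x, 0 ≤ A n x := fun n x => by positivity
  have hA_bdd : ∀ x, BddBelow (Set.range fun n => A n x) := by
    intro x
    exact ⟨0, by rintro r ⟨n, rfl⟩; exact hA_nonneg n x⟩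
  have hA_anti : ∀ x, x ≤ C.e → Antitone (fun n => A n x) := by
    intro x hx
    refine antitone_nat_of_succ_le (fun n => ?_)
    have hnat := C.nuF_half_le (hmem n) (hpos n) (hmem (n+1)) (hdouble n) hx
    show (C.nuF (h (n+1)) x : ℝ) / 2 ^ (n+1) ≤ (C.nuF (h n) x : ℝ) / 2 ^ n
    have h1 : (C.nuF (h (n+1)) x : ℝ) ≤ 2 * (C.nuF (h n) x : ℝ) := by exact_mod_cast hnat
    rw [pow_succ, div_le_div_iff₀ (by positivity) (by positivity)]
    nlinarith [hA_nonneg n x, pow_pos (show (0:ℝ) < 2 by norm_num) n]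
  set φ : ℝ → ℝ := fun x => ⨅ n, A n x with hφ
  have htend : ∀ x, x ≤ C.e → Filter.Tendsto (fun n => A n x) Filter.atTop (nhds (φ x)) :=
    fun x hx => tendsto_atTop_ciInf (hA_anti x hx) (hA_bdd x)
  have hφ_le_A : ∀ n x, φ x ≤ A n x := fun n x => ciInf_le (hA_bdd x) n
  have hφ_nonneg : ∀ x, 0 ≤ φ x := fun x => le_ciInf (fun n => hA_nonneg n x)
  -- the key lower bound : (ν n x - 1) / 2^n ≤ φ x
  have key_nat : ∀ x, x ≤ C.e → ∀ n k,
      2^k * C.nuF (h n) x + 1 ≤ C.nuF (h (n+k)) x + 2^k := by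
    intro x hx n k
    induction k with
    | zero => simp
    | succ k ih =>
      have hstep2 : 2 * C.nuF (h (n+k)) x ≤ C.nuF (h (n+k+1)) x + 1 :=
        C.nuF_half_ge (hmem (n+k)) (hpos (n+k)) (hmem (n+k+1)) (hpos (n+k+1))
          (hdouble (n+k)) hx
      have e1 : n + (k+1) = n + k + 1 := by omega
      rw [e1]
      have e3 : 2^(k+1) * C.nuF (h n) x = 2 * (2^k * C.nuF (h n) x) := by ring
      rw [e3]
      omega
  have key_lb : ∀ x, x ≤ C.e → ∀ n, ((C.nuF (h n) x : ℝ) - 1) / 2 ^ n ≤ φ x := by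
    intro x hx n
    refine le_ciInf (fun m => ?_)
    rcases le_or_gt n m with hnm | hnm
    · obtain ⟨k, rfl⟩ := Nat.exists_eq_add_of_le hnm
      have hnat := key_nat x hx n k
      have hcast : 2^k * ((C.nuF (h n) x : ℝ) - 1) ≤ (C.nuF (h (n+k)) x : ℝ) := by
        have : (2^k * C.nuF (h n) x + 1 : ℝ) ≤ (C.nuF (h (n+k)) x : ℝ) + 2^k := by
          exact_mod_cast hnat
        linarith
      show ((C.nuF (h n) x : ℝ) - 1) / 2 ^ n ≤ (C.nuF (h (n+k)) x : ℝ) / 2 ^ (n+k)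
      rw [pow_add, div_le_div_iff₀ (by positivity) (by positivity)]
      calc ((C.nuF (h n) x : ℝ) - 1) * (2^n * 2^k) = (2^k * ((C.nuF (h n) x : ℝ) - 1)) * 2^n := by
            ring
      _ ≤ (C.nuF (h (n+k)) x : ℝ) * 2^n := by
            have : (0:ℝ) < 2^n := by positivity
            nlinarith
    · calc ((C.nuF (h n) x : ℝ) - 1) / 2 ^ n ≤ (C.nuF (h n) x : ℝ) / 2 ^ n := by
            apply div_le_div_of_nonneg_right ?_ (by positivity)
            · linarith
      _ = A n x := rfl
      _ ≤ A m x := (hA_anti x hx) hnm.le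
  -- basic values
  have hφ0 : φ 0 = 0 := by
    have : ∀ n, A n 0 = 0 := by
      intro n
      show (C.nuF (h n) 0 : ℝ) / 2 ^ n = 0
      rw [C.nuF_zero]
      norm_num
    calc φ 0 = ⨅ n, A n 0 := rfl
    _ = ⨅ n : ℕ, (0:ℝ) := by congr 1; funext n; exact this n
    _ = 0 := ciInf_const
  have hν0e : C.nuF (h 0) C.e = 1 := by
    refine le_antisymm (C.nuF_le ?_) (C.nuF_pos (hmem 0) (hpos 0) le_rfl C.hepos)
    rw [C.opow_one (hmem 0), h0e]
  have hlam_le : φ C.e ≤ 1 := by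
    have := hφ_le_A 0 C.e
    rwa [show A 0 C.e = 1 by show ((C.nuF (h 0) C.e : ℝ))/2^0 = 1; rw [hν0e]; norm_num] at this
  have hν1e : 2 ≤ C.nuF (h 1) C.e := by
    by_contra hcon
    push_neg at hcon
    have h1 : C.e ≤ C.opow (h 1) (C.nuF (h 1) C.e) := C.le_opow_nuF (hmem 1) (hpos 1) le_rfl
    have h2 : C.opow (h 1) (C.nuF (h 1) C.e) ≤ C.opow (h 1) 1 :=
      C.opow_mono_exp (hmem 1) (by omega)
    rw [C.opow_one (hmem 1)] at h2
    exact absurd (le_trans h1 h2) (not_le.mpr (hlt 0))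
  have hlam_pos : 0 < φ C.e := by
    have := key_lb C.e le_rfl 1
    have h2 : ((C.nuF (h 1) C.e : ℝ) - 1) / 2 ^ 1 ≥ 1/2 := by
      have : (2:ℝ) ≤ (C.nuF (h 1) C.e : ℝ) := by exact_mod_cast hν1e
      rw [ge_iff_le, div_le_div_iff₀ (by norm_num) (by norm_num)]
      linarith
    linarith
  have hφ_mono : ∀ x y, x ≤ y → y ≤ C.e → φ x ≤ φ y := by
    intro x y hxy hy
    refine le_ciInf (fun n => le_trans (hφ_le_A n x) ?_)
    show (C.nuF (h n) x : ℝ) / 2 ^ n ≤ (C.nuF (h n) y : ℝ) / 2 ^ n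
    have := C.nuF_mono (hmem n) (hpos n) hxy hy
    apply div_le_div_of_nonneg_right ?_ (by positivity)
    exact_mod_cast this
  have hφ_le_lam : ∀ x, x ≤ C.e → φ x ≤ φ C.e := fun x hx => hφ_mono x C.e hx le_rfl
  -- limit of 2/2^n
  have htwo : Filter.Tendsto (fun n : ℕ => (2:ℝ) / 2 ^ n) Filter.atTop (nhds 0) := by
    have hgeo : Filter.Tendsto (fun n : ℕ => ((2:ℝ)⁻¹) ^ n) Filter.atTop (nhds 0) :=
      tendsto_pow_atTop_nhds_zero_of_lt_one (by norm_num) (by norm_num)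
    have := hgeo.const_mul (2:ℝ)
    rw [mul_zero] at this
    convert this using 2 with n
    rw [inv_pow, div_eq_mul_inv]
  -- the ⊕ law
  have hφ_oplus : ∀ x y, x ∈ Set.Icc 0 C.e → y ∈ Set.Icc 0 C.e →
      φ (C.oplus x y) = min (φ C.e) (φ x + φ y) := by
    intro x y hx hy
    rcases eq_or_lt_of_le hx.1 with h0 | hxpos
    · rw [← h0, C.zero_oplus hy, hφ0, zero_add]
      exact (min_eq_right (hφ_le_lam y hy.2)).symm
    rcases eq_or_lt_of_le hy.1 with h0 | hypos
    · rw [← h0, C.oplus_zero hx, hφ0, add_zero]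
      exact (min_eq_right (hφ_le_lam x hx.2)).symm
    have hopmem := C.oplus_mem hx hy
    refine le_antisymm (le_min (hφ_le_lam _ hopmem.2) ?_) ?_
    · -- subadditivity
      have hterm : ∀ n, φ (C.oplus x y) ≤ A n x + A n y := by
        intro n
        refine le_trans (hφ_le_A n _) ?_
        show (C.nuF (h n) (C.oplus x y) : ℝ) / 2^n ≤ _
        have hnat := C.nuF_oplus_le (hmem n) (hpos n) hx hy
        have hcast : (C.nuF (h n) (C.oplus x y) : ℝ) ≤
            (C.nuF (h n) x : ℝ) + (C.nuF (h n) y : ℝ) := by exact_mod_cast hnat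
        rw [← add_div]
        exact div_le_div_of_nonneg_right hcast (by positivity)
      have hsum : Filter.Tendsto (fun n => A n x + A n y) Filter.atTop
          (nhds (φ x + φ y)) := (htend x hx.2).add (htend y hy.2)
      exact ge_of_tendsto' hsum hterm
    · -- superadditivity
      have hterm : ∀ n, min (φ C.e) (φ x + φ y) - 2/2^n ≤ A n (C.oplus x y) := by
        intro n
        have hnat := C.nuF_oplus_ge (hmem n) (hpos n) hx hy hxpos hypos
        have hcast : min ((C.nuF (h n) C.e : ℝ)) ((C.nuF (h n) x : ℝ) + (C.nuF (h n) y : ℝ))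
            ≤ (C.nuF (h n) (C.oplus x y) : ℝ) + 2 := by
          have : ((min (C.nuF (h n) C.e) (C.nuF (h n) x + C.nuF (h n) y) : ℕ) : ℝ)
              ≤ ((C.nuF (h n) (C.oplus x y) + 2 : ℕ) : ℝ) := by exact_mod_cast hnat
          push_cast at this
          exact this
        have hdiv : min ((C.nuF (h n) C.e : ℝ)) ((C.nuF (h n) x : ℝ) + (C.nuF (h n) y : ℝ)) / 2^n
            ≤ A n (C.oplus x y) + 2/2^n := by
          show _ ≤ (C.nuF (h n) (C.oplus x y) : ℝ)/2^n + 2/2^n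
          rw [← add_div]
          exact div_le_div_of_nonneg_right hcast (by positivity)
        have hminle : min (φ C.e) (φ x + φ y) ≤
            min ((C.nuF (h n) C.e : ℝ)) ((C.nuF (h n) x : ℝ) + (C.nuF (h n) y : ℝ)) / 2^n := by
          rcases min_le_iff.mp (le_refl (min ((C.nuF (h n) C.e : ℝ))
            ((C.nuF (h n) x : ℝ) + (C.nuF (h n) y : ℝ)))) with _ | _
          all_goals {
            rcases le_total ((C.nuF (h n) C.e : ℝ)) ((C.nuF (h n) x : ℝ) + (C.nuF (h n) y : ℝ))
              with hc | hc
            · rw [min_eq_left hc]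
              exact le_trans (min_le_left _ _) (hφ_le_A n C.e)
            · rw [min_eq_right hc]
              have h1 : φ x + φ y ≤ ((C.nuF (h n) x : ℝ) + (C.nuF (h n) y : ℝ)) / 2^n := by
                rw [add_div]
                exact add_le_add (hφ_le_A n x) (hφ_le_A n y)
              exact le_trans (min_le_right _ _) h1
          }
        linarith [hminle, hdiv]
      have hlhs : Filter.Tendsto (fun n : ℕ => min (φ C.e) (φ x + φ y) - 2/2^n)
          Filter.atTop (nhds (min (φ C.e) (φ x + φ y))) := by
        have hconst : Filter.Tendsto (fun _ : ℕ => min (φ C.e) (φ x + φ y)) Filter.atTop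
            (nhds (min (φ C.e) (φ x + φ y))) := tendsto_const_nhds
        have := hconst.sub htwo
        rwa [sub_zero] at this
      exact le_of_tendsto_of_tendsto' hlhs (htend _ hopmem.2) hterm
  -- the negation law
  have hφ_Nc : ∀ x, x ∈ Set.Icc 0 C.e → φ (C.Nc x) = φ C.e - φ x := by
    intro x hx
    have hNmem := C.Nc_mem hx
    have hsum_ge : φ C.e ≤ φ x + φ (C.Nc x) := by
      have hee : C.oplus x (C.Nc x) = C.e :=
        (C.oplus_eq_e_iff hx hNmem).mpr le_rfl
      have := hφ_oplus x (C.Nc x) hx hNmem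
      rw [hee] at this
      rcases le_total (φ C.e) (φ x + φ (C.Nc x)) with hc | hc
      · exact hc
      · rw [min_eq_right hc] at this; linarith
    have hsum_le : φ x + φ (C.Nc x) ≤ φ C.e := by
      have hterm : ∀ n, A n x + A n (C.Nc x) ≤ A n C.e + 2/2^n := by
        intro n
        have hnat := C.nuF_Nc_le (hmem n) (hpos n) hx
        have hcast : (C.nuF (h n) x : ℝ) + (C.nuF (h n) (C.Nc x) : ℝ) ≤
            (C.nuF (h n) C.e : ℝ) + 2 := by exact_mod_cast hnat
        show (C.nuF (h n) x : ℝ)/2^n + (C.nuF (h n) (C.Nc x) : ℝ)/2^n ≤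
          (C.nuF (h n) C.e : ℝ)/2^n + 2/2^n
        rw [← add_div, ← add_div]
        exact div_le_div_of_nonneg_right hcast (by positivity)
      have hlhs : Filter.Tendsto (fun n => A n x + A n (C.Nc x)) Filter.atTop
          (nhds (φ x + φ (C.Nc x))) := (htend x hx.2).add (htend _ hNmem.2)
      have hrhs : Filter.Tendsto (fun n : ℕ => A n C.e + 2/2^n) Filter.atTop
          (nhds (φ C.e)) := by
        have := (htend C.e le_rfl).add htwo
        rwa [add_zero] at this
      exact le_of_tendsto_of_tendsto' hlhs hrhs hterm
    linarith
  -- h tends to zero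
  have hh_anti : Antitone h := by
    refine antitone_nat_of_succ_le (fun n => ?_)
    rw [← hdouble n]
    exact C.le_oplus (hmem (n+1)) (hmem (n+1))
  have hh_bdd : BddBelow (Set.range h) := ⟨0, by rintro r ⟨n, rfl⟩; exact (hpos n).le⟩
  have hh_inf_zero : (⨅ n, h n) = 0 := by
    by_contra hcon
    have hlpos : 0 < ⨅ n, h n :=
      lt_of_le_of_ne (le_ciInf (fun n => (hpos n).le)) (Ne.symm hcon)
    set l := ⨅ n, h n with hl
    have hlle : ∀ n, l ≤ h n := fun n => ciInf_le hh_bdd n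
    have hlmem : l ∈ Set.Icc 0 C.e := ⟨hlpos.le, le_trans (hlle 0) (hmem 0).2⟩
    have hle2 : C.oplus l l ≤ l := by
      refine le_ciInf (fun n => ?_)
      calc C.oplus l l ≤ C.oplus (h (n+1)) (h (n+1)) :=
        C.oplus_mono hlmem (hmem (n+1)) hlmem (hmem (n+1)) (hlle (n+1)) (hlle (n+1))
      _ = h n := hdouble n
    have hlt2 : l < C.oplus l l :=
      C.oplus_strict hlmem (lt_of_le_of_lt (hlle 1) (hlt 0)) hlmem hlpos
    exact absurd hle2 (not_le.mpr hlt2)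
  have hh_tend : Filter.Tendsto h Filter.atTop (nhds 0) := by
    have := tendsto_atTop_ciInf hh_anti hh_bdd
    rwa [hh_inf_zero] at this
  -- positivity of φ
  have hφ_pos : ∀ u, u ∈ Set.Icc 0 C.e → 0 < u → 0 < φ u := by
    intro u hu hupos
    obtain ⟨n, hn⟩ := (hh_tend.eventually_lt_const hupos).exists
    have hν2 : 2 ≤ C.nuF (h n) u := by
      by_contra hcon
      push_neg at hcon
      have h1 : u ≤ C.opow (h n) (C.nuF (h n) u) := C.le_opow_nuF (hmem n) (hpos n) hu.2
      have h2 : C.opow (h n) (C.nuF (h n) u) ≤ C.opow (h n) 1 :=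
        C.opow_mono_exp (hmem n) (by omega)
      rw [C.opow_one (hmem n)] at h2
      exact absurd (le_trans h1 h2) (not_le.mpr hn)
    have := key_lb u hu.2 n
    have h3 : (0:ℝ) < ((C.nuF (h n) u : ℝ) - 1) / 2^n := by
      have : (2:ℝ) ≤ (C.nuF (h n) u : ℝ) := by exact_mod_cast hν2
      apply div_pos (by linarith) (by positivity)
    linarith
  -- strict monotonicity
  have hφ_strict : ∀ x y, x ∈ Set.Icc 0 C.e → y ∈ Set.Icc 0 C.e → x < y → φ x < φ y := by
    intro x y hx hy hxy
    have hxe : x < C.e := lt_of_lt_of_le hxy hy.2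
    set d := t.mul y (C.Nc x) with hd
    have hdmem : d ∈ Set.Icc 0 C.e := by
      constructor
      · exact (t.maps_to y (C.memI hy) _ (C.Nc_memI hx)).1
      · exact le_trans (t.mul_le_left (C.memI hy) (C.Nc_memI hx)) hy.2
    have hdpos : 0 < d := by
      rcases eq_or_lt_of_le hdmem.1 with h0 | h0
      · exfalso
        have hmul0 : t.mul (C.Nc x) y = 0 := by
          rw [t.comm _ (C.Nc_memI hx) y (C.memI hy)]
          exact h0.symm
        have := (C.le_Nc_iff (C.Nc_mem hx) (C.Nc_pos hx hxe) (C.memI hy)).mpr hmul0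
        rw [C.Nc_invol hx] at this
        exact absurd this (not_le.mpr hxy)
      · exact h0
    have hdiff : C.oplus x d = y := C.oplus_diff hx hy hxy.le
    have hφx_lt_lam : φ x < φ C.e := by
      have h1 := hφ_Nc x hx
      have h2 := hφ_pos (C.Nc x) (C.Nc_mem hx) (C.Nc_pos hx hxe)
      linarith
    have := hφ_oplus x d hx hdmem
    rw [hdiff] at this
    rw [this]
    rcases le_total (φ C.e) (φ x + φ d) with hc | hc
    · rw [min_eq_left hc]; exact hφx_lt_lam
    · rw [min_eq_right hc]
      have := hφ_pos d hdmem hdpos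
      linarith
  -- the ⊙ law for φ
  have hφ_mul : ∀ x y, x ∈ Set.Icc 0 C.e → y ∈ Set.Icc 0 C.e →
      φ (t.mul x y) = max 0 (φ x + φ y - φ C.e) := by
    intro x y hx hy
    have hNx := C.Nc_mem hx
    have hNy := C.Nc_mem hy
    have hop := C.oplus_mem hNx hNy
    rw [C.mul_eq_Nc_oplus hx hy, hφ_Nc _ hop, hφ_oplus _ _ hNx hNy,
      hφ_Nc x hx, hφ_Nc y hy]
    rcases le_total (φ x + φ y) (φ C.e) with hc | hc
    · rw [min_eq_left (by linarith), max_eq_left (by linarith)]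
      ring
    · rw [min_eq_right (by linarith), max_eq_right (by linarith)]
      ring
  -- assemble Φ := φ / φ(e)
  refine ⟨fun u => φ u / φ C.e, ?_, ?_, ?_, ?_, ?_, ?_⟩
  · show φ 0 / φ C.e = 0
    rw [hφ0, zero_div]
  · show φ C.e / φ C.e = 1
    rw [div_self hlam_pos.ne']
  · intro x hx
    show φ x / φ C.e ∈ Set.Icc (0:ℝ) 1
    constructor
    · exact div_nonneg (hφ_nonneg x) hlam_pos.le
    · rw [div_le_one hlam_pos]
      exact hφ_le_lam x hx.2
  · intro x y hx hy hxy
    show φ x / φ C.e < φ y / φ C.e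
    exact (div_lt_div_iff_of_pos_right hlam_pos).mpr (hφ_strict x y hx hy hxy)
  · intro x y hx hy
    show φ (t.mul x y) / φ C.e = max 0 (φ x / φ C.e + φ y / φ C.e - 1)
    rw [hφ_mul x y hx hy, ← max_div_div_right hlam_pos.le, zero_div]
    congr 1
    field_simp
  · intro x hx
    show φ (C.Nc x) / φ C.e = 1 - φ x / φ C.e
    rw [hφ_Nc x hx]
    field_simp

end NilpComp


/-! ### Łukasiewicz-specific lemmas and evaluation -/

lemma luk_mul_def (x y : ℝ) : lukT.mul x y = max 0 (x + y - 1) := rfl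

lemma resid_luk {x y : ℝ} (hx : x ∈ I01) (hy : 0 ≤ y) :
    resid lukT x y = min 1 (1 - x + y) := by
  have hmin0 : 0 ≤ min 1 (1 - x + y) := le_min zero_le_one (by
    have := hx.2; linarith)
  have hset : lukT.Rset x y = Set.Icc 0 (min 1 (1 - x + y)) := by
    ext c
    simp only [ContTNorm.Rset, Set.mem_setOf_eq, Set.mem_Icc]
    constructor
    · rintro ⟨⟨hc0, hc1⟩, hle⟩
      rw [luk_mul_def] at hle
      have h2 : x + c - 1 ≤ y := le_trans (le_max_right _ _) hle
      exact ⟨hc0, le_min hc1 (by linarith)⟩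
    · rintro ⟨hc0, hc⟩
      have h1 : c ≤ 1 := le_trans hc (min_le_left _ _)
      have h2 : c ≤ 1 - x + y := le_trans hc (min_le_right _ _)
      refine ⟨⟨hc0, h1⟩, ?_⟩
      rw [luk_mul_def]
      exact max_le hy (by linarith)
  rw [ContTNorm.resid_eq_sSup_Rset, hset, csSup_Icc hmin0]

lemma eval_mem {t : ContTNorm} {T : TruthAlg t} {v : ℕ → ℝ} (hv : IsValuation t T v) :
    ∀ α, eval t v α ∈ T.carrier := by
  intro α
  induction α with
  | var i => exact hv i
  | bot => exact T.zero_mem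
  | conj a b iha ihb => exact T.mul_mem _ iha _ ihb
  | impl a b iha ihb => exact T.resid_mem _ iha _ ihb

/-- the double negation law of Łukasiewicz logic. -/
lemma taut_dneg :
    Formula.impl (Formula.impl (Formula.impl (Formula.var 0) Formula.bot) Formula.bot)
      (Formula.var 0) ∈ Taut lukT (fullAlg lukT) := by
  intro v hv
  have hx : v 0 ∈ I01 := hv 0
  show resid lukT (resid lukT (resid lukT (v 0) 0) 0) (v 0) = 1
  have hxI : (1 - v 0) ∈ I01 := ⟨by linarith [hx.2], by linarith [hx.1]⟩
  have e1 : resid lukT (v 0) 0 = 1 - v 0 := by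
    rw [resid_luk hx le_rfl, add_zero, min_eq_right (by linarith [hx.1])]
  have e2 : resid lukT (1 - v 0) 0 = v 0 := by
    rw [resid_luk hxI le_rfl, add_zero]
    have : 1 - (1 - v 0) = v 0 := by ring
    rw [this, min_eq_right hx.2]
  rw [e1, e2, resid_luk hx hx.1, min_eq_left (by linarith [hx.1])]

/-- The backward direction: an isomorphism onto a Łukasiewicz truth-value algebra
forces all Łukasiewicz tautologies to hold. -/
lemma backward_dir (t : ContTNorm) (T : TruthAlg t) (S : Set ℝ) (σ : ℝ → ℝ)
    (hS : S ⊆ I01) (h0 : (0:ℝ) ∈ S) (h1 : (1:ℝ) ∈ S)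
    (hmin : ∀ x ∈ S, ∀ y ∈ S, min 1 (1 - x + y) ∈ S)
    (hiso : IsTruthIso t lukT T.carrier S σ) :
    Taut lukT (fullAlg lukT) ⊆ Taut t T := by
  obtain ⟨⟨hmaps, hinj, hsurj⟩, hmono, hmul⟩ := hiso
  have hσ1 : σ 1 = 1 := by
    obtain ⟨c, hc, hc1⟩ := hsurj h1
    have h2 : σ c ≤ σ 1 := hmono c hc 1 T.one_mem (T.subset hc).2
    exact le_antisymm (hS (hmaps T.one_mem)).2 (hc1 ▸ h2)
  have hσ0 : σ 0 = 0 := by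
    obtain ⟨c, hc, hc0⟩ := hsurj h0
    have h2 : σ 0 ≤ σ c := hmono 0 T.zero_mem c hc (T.subset hc).1
    exact le_antisymm (hc0 ▸ h2) (hS (hmaps T.zero_mem)).1
  have hrefl : ∀ a ∈ T.carrier, ∀ b ∈ T.carrier, σ a ≤ σ b → a ≤ b := by
    intro a ha b hb hab
    by_contra hcon
    push_neg at hcon
    have h2 := hmono b hb a ha hcon.le
    have heq : a = b := hinj ha hb (le_antisymm hab h2)
    rw [heq] at hcon
    exact lt_irrefl _ hcon
  have hresid : ∀ a ∈ T.carrier, ∀ b ∈ T.carrier,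
      σ (resid t a b) = resid lukT (σ a) (σ b) := by
    intro a ha b hb
    have haI := T.subset ha
    have hbI := T.subset hb
    have hσaI : σ a ∈ I01 := hS (hmaps ha)
    have hσbI : σ b ∈ I01 := hS (hmaps hb)
    have hr : resid t a b ∈ T.carrier := T.resid_mem a ha b hb
    rw [resid_luk hσaI hσbI.1]
    refine le_antisymm (le_min (hS (hmaps hr)).2 ?_) ?_
    · have hle : t.mul a (resid t a b) ≤ b := t.mul_resid_le haI hbI.1
      have h2 : σ (t.mul a (resid t a b)) ≤ σ b :=
        hmono _ (T.mul_mem a ha _ hr) b hb hle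
      rw [hmul a ha _ hr, luk_mul_def] at h2
      have h3 : σ a + σ (resid t a b) - 1 ≤ σ b := le_trans (le_max_right _ _) h2
      linarith
    · obtain ⟨cm, hcm, hcmEq⟩ := hsurj (hmin (σ a) (hmaps ha) (σ b) (hmaps hb))
      have h4 : lukT.mul (σ a) (σ cm) ≤ σ b := by
        rw [hcmEq, luk_mul_def]
        refine max_le hσbI.1 ?_
        have := min_le_right 1 (1 - σ a + σ b)
        linarith
      rw [← hmul a ha cm hcm] at h4
      have h5 : t.mul a cm ≤ b := hrefl _ (T.mul_mem a ha cm hcm) b hb h4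
      have h6 : cm ≤ resid t a b := t.le_resid (T.subset hcm) h5
      calc min 1 (1 - σ a + σ b) = σ cm := hcmEq.symm
      _ ≤ σ (resid t a b) := hmono cm hcm _ hr h6
  intro α hα v hv
  have hmem : ∀ β, eval t v β ∈ T.carrier := eval_mem hv
  have hcomm : ∀ β, σ (eval t v β) = eval lukT (fun i => σ (v i)) β := by
    intro β
    induction β with
    | var i => rfl
    | bot => exact hσ0
    | conj a b iha ihb =>
      show σ (t.mul (eval t v a) (eval t v b)) = lukT.mul _ _
      rw [hmul _ (hmem a) _ (hmem b), iha, ihb]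
    | impl a b iha ihb =>
      show σ (resid t (eval t v a) (eval t v b)) = resid lukT _ _
      rw [hresid _ (hmem a) _ (hmem b), iha, ihb]
  have hvl : IsValuation lukT (fullAlg lukT) (fun i => σ (v i)) :=
    fun i => hS (hmaps (hv i))
  have hone := hα _ hvl
  rw [← hcomm α] at hone
  exact hinj (hmem α) T.one_mem (by rw [hone, hσ1])


/-- The forward direction. -/
lemma forward_dir (t : ContTNorm) (T : TruthAlg t)
    (H : Taut lukT (fullAlg lukT) ⊆ Taut t T) :
    ∃ S : Set ℝ, S ⊆ I01 ∧ (0:ℝ) ∈ S ∧ (1:ℝ) ∈ S ∧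
      (∀ x ∈ S, ∀ y ∈ S, lukT.mul x y ∈ S) ∧
      (∀ x ∈ S, ∀ y ∈ S, min 1 (1 - x + y) ∈ S) ∧
      ∃ σ : ℝ → ℝ, IsTruthIso t lukT T.carrier S σ := by
  classical
  -- double negation inequality in T
  have hdneg : ∀ x ∈ T.carrier, resid t (resid t x 0) 0 ≤ x := by
    intro x hx
    have h := H taut_dneg (fun _ => x) (fun _ => hx)
    have hxI : x ∈ I01 := T.subset hx
    have hr1 : resid t x 0 ∈ I01 := t.resid_mem hxI le_rfl
    have hr2 : resid t (resid t x 0) 0 ∈ I01 := t.resid_mem hr1 le_rfl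
    exact t.le_of_resid_eq_one hr2 hxI.1 h
  -- nilpotency of every x < 1 in T
  have hnilp : ∀ x ∈ T.carrier, x < 1 → ∃ n, t.tpow x n = 0 := by
    intro x hx hlt1
    have hxI : x ∈ I01 := T.subset hx
    set y := resid t x 0 with hy
    have hyI : y ∈ I01 := t.resid_mem hxI le_rfl
    have hypos : 0 < y := by
      rcases eq_or_lt_of_le hyI.1 with h0 | h0
      · exfalso
        have := hdneg x hx
        rw [← hy, ← h0, t.resid_zero_left le_rfl] at this
        exact absurd this (not_le.mpr hlt1)
      · exact h0
    have hxy0 : t.mul x y = 0 :=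
      le_antisymm (t.mul_resid_le hxI le_rfl) (t.maps_to x hxI y hyI).1
    set a := ⨅ n, t.tpow x n with ha
    have haI : a ∈ I01 := t.tpow_iInf_mem hxI
    have haidem : t.mul a a = a := t.tpow_iInf_idem hxI
    rcases le_or_gt y a with hya | hay
    · exfalso
      have hapos : 0 < a := lt_of_lt_of_le hypos hya
      have h1 : t.mul a y = y := t.idem_mul haI haidem hyI hya
      have hax : a ≤ x := by
        have := t.iInf_le_tpow hxI 1
        rwa [t.tpow_one hxI] at this
      have h2 : t.mul a y ≤ t.mul x y := t.mono_left haI hxI hyI hax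
      rw [h1, hxy0] at h2
      exact absurd h2 (not_le.mpr hypos)
    · obtain ⟨n, hn⟩ := exists_lt_of_ciInf_lt hay
      refine ⟨n+1, le_antisymm ?_ (t.tpow_mem hxI (n+1)).1⟩
      rw [t.tpow_succ]
      calc t.mul (t.tpow x n) x ≤ t.mul y x :=
        t.mono_left (t.tpow_mem hxI n) hyI hxI hn.le
      _ = t.mul x y := t.comm y hyI x hxI
      _ = 0 := hxy0
  by_cases htriv : ∀ x ∈ T.carrier, x = 0 ∨ x = 1
  · -- the two-element case
    have hT : T.carrier = {0, 1} := by
      ext x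
      constructor
      · intro hx
        rcases htriv x hx with h | h
        · exact Or.inl h
        · exact Or.inr h
      · rintro (rfl | rfl)
        · exact T.zero_mem
        · exact T.one_mem
    refine ⟨{0, 1}, ?_, Or.inl rfl, Or.inr rfl, ?_, ?_, id, ?_, ?_, ?_⟩
    · rintro x (rfl | rfl)
      · exact zeroI
      · exact oneI
    · rintro x (rfl | rfl) y (rfl | rfl)
      · exact Or.inl (by rw [luk_mul_def]; norm_num)
      · exact Or.inl (by rw [luk_mul_def]; norm_num)
      · exact Or.inl (by rw [luk_mul_def]; norm_num)
      · exact Or.inr (by rw [luk_mul_def]; norm_num)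
    · rintro x (rfl | rfl) y (rfl | rfl)
      · exact Or.inr (by norm_num)
      · exact Or.inr (by norm_num)
      · exact Or.inl (by norm_num)
      · exact Or.inr (by norm_num)
    · rw [hT]; exact Set.bijOn_id _
    · intro a _ b _ h; exact h
    · rw [hT]
      rintro a (rfl | rfl) b (rfl | rfl)
      · show t.mul 0 0 = lukT.mul 0 0
        rw [t.mul_zero' zeroI, luk_mul_def]; norm_num
      · show t.mul 0 1 = lukT.mul 0 1
        rw [t.comm 0 zeroI 1 oneI, t.one_mul' 0 zeroI, luk_mul_def]; norm_num
      · show t.mul 1 0 = lukT.mul 1 0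
        rw [t.mul_zero' oneI, luk_mul_def]; norm_num
      · show t.mul 1 1 = lukT.mul 1 1
        rw [t.one_mul' 1 oneI, luk_mul_def]; norm_num
  · -- the nontrivial case
    push_neg at htriv
    obtain ⟨p, hpT, hp0, hp1⟩ := htriv
    have hpI : p ∈ I01 := T.subset hpT
    have hppos : 0 < p := lt_of_le_of_ne hpI.1 (Ne.symm hp0)
    have hplt : p < 1 := lt_of_le_of_ne hpI.2 hp1
    set q := resid t p 0 with hq
    have hqI : q ∈ I01 := t.resid_mem hpI le_rfl
    have hqpos : 0 < q := by
      rcases eq_or_lt_of_le hqI.1 with h0 | h0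
      · exfalso
        have := hdneg p hpT
        rw [← hq, ← h0, t.resid_zero_left le_rfl] at this
        exact absurd this (not_le.mpr hplt)
      · exact h0
    have hpq : t.mul p q = 0 :=
      le_antisymm (t.mul_resid_le hpI le_rfl) (t.maps_to p hpI q hqI).1
    set w := min p q with hw
    have hwpos : 0 < w := lt_min hppos hqpos
    have hwI : w ∈ I01 := ⟨hwpos.le, le_trans (min_le_left _ _) hpI.2⟩
    have hww : t.mul w w = 0 := by
      refine le_antisymm ?_ (t.maps_to w hwI w hwI).1
      calc t.mul w w ≤ t.mul p q :=
        t.mono_mono hwI hpI hwI hqI (min_le_left _ _) (min_le_right _ _)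
      _ = 0 := hpq
    -- the least positive idempotent above w
    set D := (I01 ∩ (fun c => t.mul c c - c) ⁻¹' {0}) ∩ Set.Ici w with hD
    have hDmem : ∀ c, c ∈ D ↔ c ∈ I01 ∧ t.mul c c = c ∧ w ≤ c := by
      intro c
      simp only [hD, Set.mem_inter_iff, Set.mem_preimage, Set.mem_singleton_iff,
        Set.mem_Ici, sub_eq_zero, and_assoc]
    have hDclosed : IsClosed D := by
      refine IsClosed.inter ?_ isClosed_Ici
      exact ((NilpComp.continuousOn_mul_diag (t := t)).sub continuousOn_id)
        |>.preimage_isClosed_of_isClosed isClosed_Icc isClosed_singleton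
    have hD1 : (1:ℝ) ∈ D := by
      rw [hDmem]
      exact ⟨oneI, t.one_mul' 1 oneI, hwI.2⟩
    have hDbdd : BddBelow D := ⟨0, fun c hc => ((hDmem c).mp hc).1.1⟩
    set e := sInf D with he
    have heD : e ∈ D := hDclosed.csInf_mem ⟨1, hD1⟩ hDbdd
    obtain ⟨heI, hee, hwe⟩ := (hDmem e).mp heD
    have hepos : 0 < e := lt_of_lt_of_le hwpos hwe
    have hwlt : w < e := by
      rcases eq_or_lt_of_le hwe with h0 | h0
      · exfalso
        rw [h0] at hww
        rw [hww] at hee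
        rw [← hee] at hepos
        exact lt_irrefl 0 hepos
      · exact h0
    have hnoidem : ∀ c, 0 < c → c < e → t.mul c c ≠ c := by
      intro c hcpos hce hcc
      have hcI : c ∈ I01 := ⟨hcpos.le, le_trans hce.le heI.2⟩
      have hwc : w ≤ c := by
        by_contra hcon
        push_neg at hcon
        have h1 : t.mul c c ≤ t.mul w w := t.mono_mono hcI hwI hcI hwI hcon.le hcon.le
        rw [hcc, hww] at h1
        exact absurd h1 (not_le.mpr hcpos)
      have : c ∈ D := (hDmem c).mpr ⟨hcI, hcc, hwc⟩
      exact absurd (csInf_le hDbdd this) (not_le.mpr hce)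
    set C : NilpComp t := ⟨e, heI, hepos, hee, hnoidem, w, hwI, hwpos, hwlt, hww⟩ with hC
    -- T ∖ {1} lies strictly below e
    have htpow_e : ∀ n, t.tpow e (n+1) = e := by
      intro n
      induction n with
      | zero => exact t.tpow_one heI
      | succ n ih => rw [t.tpow_succ, ih, hee]
    have hTe : ∀ x ∈ T.carrier, x ≠ 1 → x ∈ Set.Icc 0 e ∧ x < e := by
      intro x hx hx1
      have hxI : x ∈ I01 := T.subset hx
      have hxlt : x < 1 := lt_of_le_of_ne hxI.2 hx1
      obtain ⟨N, hN⟩ := hnilp x hx hxlt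
      have hN0 : N ≠ 0 := by
        intro h0
        rw [h0, t.tpow_zero] at hN
        exact one_ne_zero hN
      obtain ⟨M, rfl⟩ := Nat.exists_eq_succ_of_ne_zero hN0
      have hxe : x < e := by
        by_contra hcon
        push_neg at hcon
        have h1 : t.tpow e (M+1) ≤ t.tpow x (M+1) := t.tpow_le_tpow heI hxI hcon (M+1)
        rw [htpow_e M, hN] at h1
        exact absurd h1 (not_le.mpr hepos)
      exact ⟨⟨hxI.1, hxe.le⟩, hxe⟩
    -- get the isomorphism of the component
    obtain ⟨Φ, hΦ0, hΦe, hΦmem, hΦstrict, hΦmul, hΦNc⟩ := C.exists_Phi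
    have hCe : C.e = e := rfl
    rw [hCe] at hΦe hΦmem hΦstrict hΦmul hΦNc
    set σ : ℝ → ℝ := fun u => if u = 1 then (1:ℝ) else Φ u with hσ
    have hσ1 : σ 1 = 1 := if_pos rfl
    have hσval : ∀ x : ℝ, x ≠ 1 → σ x = Φ x := fun x hx => if_neg hx
    have hΦlt1 : ∀ x ∈ T.carrier, x ≠ 1 → Φ x < 1 := by
      intro x hx hx1
      obtain ⟨hxmem, hxe⟩ := hTe x hx hx1
      have := hΦstrict x e hxmem ⟨hepos.le, le_rfl⟩ hxe
      rwa [hΦe] at this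
    have hΦnonneg : ∀ x ∈ T.carrier, x ≠ 1 → 0 ≤ Φ x := by
      intro x hx hx1
      exact (hΦmem x (hTe x hx hx1).1).1
    have hσmem : ∀ x ∈ T.carrier, σ x ∈ I01 := by
      intro x hx
      by_cases hx1 : x = 1
      · rw [hx1, hσ1]; exact oneI
      · rw [hσval x hx1]
        exact ⟨hΦnonneg x hx hx1, (hΦlt1 x hx hx1).le⟩
    have hσstrict : ∀ x ∈ T.carrier, ∀ y ∈ T.carrier, x < y → σ x < σ y := by
      intro x hx y hy hxy
      have hx1 : x ≠ 1 := by
        intro h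
        rw [h] at hxy
        exact absurd (T.subset hy).2 (not_le.mpr hxy)
      by_cases hy1 : y = 1
      · rw [hy1, hσ1, hσval x hx1]
        exact hΦlt1 x hx hx1
      · rw [hσval x hx1, hσval y hy1]
        exact hΦstrict x y (hTe x hx hx1).1 (hTe y hy hy1).1 hxy
    have hσmono : ∀ x ∈ T.carrier, ∀ y ∈ T.carrier, x ≤ y → σ x ≤ σ y := by
      intro x hx y hy hxy
      rcases eq_or_lt_of_le hxy with rfl | h
      · exact le_rfl
      · exact (hσstrict x hx y hy h).le
    have hσ0 : σ 0 = 0 := by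
      rw [hσval 0 (by norm_num), hΦ0]
    -- the t-norm law for σ
    have hσmul : ∀ a ∈ T.carrier, ∀ b ∈ T.carrier,
        σ (t.mul a b) = lukT.mul (σ a) (σ b) := by
      intro a ha b hb
      have haI := T.subset ha
      have hbI := T.subset hb
      by_cases ha1 : a = 1
      · rw [ha1, t.one_mul' b hbI, hσ1, luk_mul_def]
        have : (1:ℝ) + σ b - 1 = σ b := by ring
        rw [this, max_eq_right (hσmem b hb).1]
      by_cases hb1 : b = 1
      · rw [hb1, t.mul_one' haI, hσ1, luk_mul_def]
        have : σ a + 1 - 1 = σ a := by ring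
        rw [this, max_eq_right (hσmem a ha).1]
      · have hab : t.mul a b ≠ 1 := by
          intro hcon
          have h1 : t.mul a b ≤ a := t.mul_le_left haI hbI
          rw [hcon] at h1
          have := lt_of_le_of_ne haI.2 ha1
          exact absurd h1 (not_le.mpr this)
        rw [hσval _ hab, hσval a ha1, hσval b hb1, luk_mul_def]
        exact hΦmul a b (hTe a ha ha1).1 (hTe b hb hb1).1
    refine ⟨σ '' T.carrier, ?_, ?_, ?_, ?_, ?_, σ, ⟨?_, ?_, ?_⟩, hσmono, hσmul⟩
    · rintro u ⟨x, hx, rfl⟩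
      exact hσmem x hx
    · exact ⟨0, T.zero_mem, hσ0⟩
    · exact ⟨1, T.one_mem, hσ1⟩
    · -- closure under the Łukasiewicz t-norm
      rintro u ⟨a, ha, rfl⟩ v ⟨b, hb, rfl⟩
      exact ⟨t.mul a b, T.mul_mem a ha b hb, hσmul a ha b hb⟩
    · -- closure under the Łukasiewicz residuum
      rintro u ⟨a, ha, rfl⟩ v ⟨b, hb, rfl⟩
      have haI := T.subset ha
      have hbI := T.subset hb
      by_cases ha1 : a = 1
      · rw [ha1, hσ1]
        have : (1:ℝ) - 1 + σ b = σ b := by ring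
        rw [this, min_eq_right (hσmem b hb).2]
        exact ⟨b, hb, rfl⟩
      by_cases hb1 : b = 1
      · rw [hb1, hσ1]
        have h2 : (1:ℝ) ≤ 1 - σ a + 1 := by
          have := (hσmem a ha).2; linarith
        rw [min_eq_left h2]
        exact ⟨1, T.one_mem, hσ1⟩
      · have hamem := (hTe a ha ha1).1
        have hbmem := (hTe b hb hb1).1
        rcases le_or_gt a b with hab | hba
        · have : σ a ≤ σ b := hσmono a ha b hb hab
          rw [min_eq_left (by linarith)]
          exact ⟨1, T.one_mem, hσ1⟩
        · -- b < a : the residuum is Φ of resid t a b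
          have hr : resid t a b ∈ T.carrier := T.resid_mem a ha b hb
          have hr1 : resid t a b ≠ 1 := by
            intro hcon
            exact absurd (t.le_of_resid_eq_one haI hbI.1 hcon) (not_le.mpr hba)
          have hrmem := (hTe _ hr hr1).1
          have hapos : 0 < a := lt_of_le_of_lt hbI.1 hba
          have hmulr : t.mul a (resid t a b) = b := t.mul_resid_eq haI hbI hba.le
          have hΦr : Φ (resid t a b) = 1 - Φ a + Φ b := by
            have hkey := hΦmul a (resid t a b) hamem hrmem
            rw [hmulr] at hkey
            rcases eq_or_lt_of_le hbI.1 with hb0 | hb0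
            · -- b = 0 : resid is the negation
              have hres0 : resid t a b = C.Nc a := by
                rw [← hb0, C.Nc_of_pos hapos]
              rw [hres0, hΦNc a hamem, ← hb0, hΦ0]
              ring
            · -- b > 0
              have hΦbpos : 0 < Φ b := by
                have := hΦstrict 0 b ⟨le_rfl, hepos.le⟩ hbmem hb0
                rwa [hΦ0] at this
              rcases le_or_gt (Φ a + Φ (resid t a b) - 1) 0 with hc | hc
              · rw [max_eq_left hc] at hkey
                exact absurd hkey hΦbpos.ne'
              · rw [max_eq_right hc.le] at hkey
                linarith
          have hσab : σ b < σ a := hσstrict b hb a ha hba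
          rw [hσval a ha1, hσval b hb1] at hσab ⊢
          rw [min_eq_right (by linarith)]
          exact ⟨resid t a b, hr, by rw [hσval _ hr1, hΦr]⟩
    · -- MapsTo
      exact Set.mapsTo_image σ T.carrier
    · -- InjOn
      intro x hx y hy hxy
      by_contra hne
      rcases lt_or_gt_of_ne hne with h | h
      · exact absurd hxy (ne_of_lt (hσstrict x hx y hy h))
      · exact absurd hxy.symm (ne_of_lt (hσstrict y hy x hx h))
    · -- SurjOn
      exact Set.Subset.rfl

/-- The logic of `(T, t)` extends Łukasiewicz logic iff `(T, t)` is isomorphic to an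
algebra of truth values for the Łukasiewicz t-norm. -/
theorem extends_Lukasiewicz_iff_iso (t : ContTNorm) (T : TruthAlg t) :
    Taut lukT (fullAlg lukT) ⊆ Taut t T ↔
      ∃ S : Set ℝ, S ⊆ I01 ∧ (0:ℝ) ∈ S ∧ (1:ℝ) ∈ S ∧
        (∀ x ∈ S, ∀ y ∈ S, lukT.mul x y ∈ S) ∧
        (∀ x ∈ S, ∀ y ∈ S, min 1 (1 - x + y) ∈ S) ∧
        ∃ σ : ℝ → ℝ, IsTruthIso t lukT T.carrier S σ := by
  constructor
  · intro H
    exact forward_dir t T H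
  · rintro ⟨S, hS, h0, h1, _hmul, hmin, σ, hiso⟩
    exact backward_dir t T S σ hS h0 h1 hmin hiso

end
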